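/- arXiv:2112.09429 — 3 statements merged into one kernel-verified Lean document; each statement's English description precedes it below -/
import Mathlib

section
/- Let F_1,…,F_n : ℝ^d → ℝ be G-Lipschitz and L-smooth, let θ ∈ (0,1], λ ≥ 0, ν > 0, let S ⊆ {1,…,n} with |S| = m, and set F̃_i(w) = F_i(w) + (λ/2)‖w‖². Then the smoothed partial superquantile F_{θ,S}^ν(w) = max_{π∈P_{θ,S}} ( ∑_{i∈S} π_i F̃_i(w) − ν D_S(π) ) has, for each w, a unique maximizer π*(w), is continuously differentiable with ∇F_{θ,S}^ν(w) = ∑_{i∈S} π*_i(w) ∇F̃_i(w), and is L'-smooth (its gradient is L'-Lipschitz) with L' = L + λ + G²/ν. -/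
set_option maxHeartbeats 1000000

open scoped BigOperators
open InnerProductSpace

noncomputable section

section SPSAux
variable {n : ℕ}

lemma log_ge_aux {x : ℝ} (hx : 1 ≤ x) : 2*(x-1)/(x+1) ≤ Real.log x := by
  have key : ∀ y ∈ Set.Ici (1:ℝ),
      HasDerivAt (fun z => Real.log z - 2*(z-1)/(z+1)) (y⁻¹ - 4/(y+1)^2) y := by
    intro y hy
    have hy0 : (0:ℝ) < y := lt_of_lt_of_le one_pos hy
    have h1 : HasDerivAt Real.log y⁻¹ y := Real.hasDerivAt_log hy0.ne'
    have h2 : HasDerivAt (fun z : ℝ => 2*(z-1)/(z+1))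
        ((2*(y+1) - 2*(y-1)*1)/(y+1)^2) y := by
      have hnum : HasDerivAt (fun z : ℝ => 2*(z-1)) 2 y := by
        simpa using ((hasDerivAt_id y).sub_const 1).const_mul (2:ℝ)
      have hden : HasDerivAt (fun z : ℝ => z+1) 1 y := (hasDerivAt_id y).add_const 1
      exact hnum.div hden (by positivity)
    rw [show 2*(y+1) - 2*(y-1)*1 = (4:ℝ) by ring] at h2
    exact h1.sub h2
  have hmono : MonotoneOn (fun z => Real.log z - 2*(z-1)/(z+1)) (Set.Ici 1) := by
    apply monotoneOn_of_deriv_nonneg (convex_Ici 1)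
    · exact continuousOn_of_forall_continuousAt fun y hy => ((key y hy).continuousAt)
    · intro y hy
      rw [interior_Ici] at hy
      exact ((key y (Set.mem_Ici.2 (le_of_lt (Set.mem_Ioi.1 hy)))).differentiableAt).differentiableWithinAt
    · intro y hy
      rw [interior_Ici] at hy
      rw [(key y (Set.mem_Ici.2 (le_of_lt (Set.mem_Ioi.1 hy)))).deriv]
      have hy0 : (0:ℝ) < y := lt_trans one_pos (Set.mem_Ioi.1 hy)
      rw [sub_nonneg, div_le_iff₀ (by positivity), inv_mul_eq_div, le_div_iff₀ (by positivity)]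
      nlinarith [sq_nonneg (y-1)]
  have h0 : (fun z => Real.log z - 2*(z-1)/(z+1)) 1 ≤
      (fun z => Real.log z - 2*(z-1)/(z+1)) x :=
    hmono (Set.self_mem_Ici) hx hx
  simp only [Real.log_one] at h0
  norm_num at h0
  linarith

lemma log_pinsker_pt {a b : ℝ} (ha : 0 < a) (hb : 0 < b) :
    2*(a-b)^2/(a+b) ≤ (a-b)*(Real.log a - Real.log b) := by
  have key : ∀ p q : ℝ, 0 < p → 0 < q → q ≤ p →
      2*(p-q)^2/(p+q) ≤ (p-q)*(Real.log p - Real.log q) := by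
    intro p q hp hq hqp
    have hx : 1 ≤ p/q := (one_le_div hq).2 hqp
    have h := log_ge_aux hx
    rw [Real.log_div hp.ne' hq.ne'] at h
    have h2 : 2*(p/q-1)/(p/q+1) = 2*(p-q)/(p+q) := by
      field_simp
    rw [h2] at h
    have hpq : 0 ≤ p - q := by linarith
    calc 2*(p-q)^2/(p+q) = (p-q) * (2*(p-q)/(p+q)) := by ring
    _ ≤ (p-q) * (Real.log p - Real.log q) := mul_le_mul_of_nonneg_left h hpq
  rcases le_total b a with hba | hab
  · exact key a b ha hb hba
  · have := key b a hb ha hab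
    calc 2*(a-b)^2/(a+b) = 2*(b-a)^2/(b+a) := by ring_nf
    _ ≤ (b-a)*(Real.log b - Real.log a) := this
    _ = (a-b)*(Real.log a - Real.log b) := by ring


lemma pinsker_sum {n : ℕ} (S : Finset (Fin n)) (a b : Fin n → ℝ)
    (ha : ∀ i ∈ S, 0 < a i) (hb : ∀ i ∈ S, 0 < b i)
    (hsa : ∑ i ∈ S, a i = 1) (hsb : ∑ i ∈ S, b i = 1) :
    (∑ i ∈ S, |a i - b i|)^2 ≤ ∑ i ∈ S, (a i - b i) * (Real.log (a i) - Real.log (b i)) := by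
  have cs := Finset.sum_sq_le_sum_mul_sum_of_sq_eq_mul S
    (r := fun i => |a i - b i|) (f := fun i => (a i + b i)/2)
    (g := fun i => 2*(a i - b i)^2/(a i + b i))
    (fun i hi => by have := ha i hi; have := hb i hi; positivity)
    (fun i hi => by have := ha i hi; have := hb i hi; positivity)
    (fun i hi => by
      have hab : a i + b i ≠ 0 := by have := ha i hi; have := hb i hi; positivity
      rw [sq_abs]
      field_simp)
  have hsum : ∑ i ∈ S, (a i + b i)/2 = 1 := by
    rw [← Finset.sum_div, Finset.sum_add_distrib, hsa, hsb]
    norm_num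
  rw [hsum, one_mul] at cs
  refine cs.trans (Finset.sum_le_sum fun i hi => log_pinsker_pt (ha i hi) (hb i hi))

def Feas (θ : ℝ) (m : ℕ) (S : Finset (Fin n)) (π : Fin n → ℝ) : Prop :=
  (∀ i, 0 ≤ π i) ∧ (∀ i ∉ S, π i = 0) ∧ (∑ i ∈ S, π i = 1) ∧ (∀ i, π i ≤ 1/(θ*m))

def Obj (ν : ℝ) (m : ℕ) (S : Finset (Fin n)) (u : Fin n → ℝ) (π : Fin n → ℝ) : ℝ :=
  (∑ i ∈ S, π i * u i) - ν * ∑ i ∈ S, π i * Real.log (π i * m)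

variable {θ ν : ℝ} {m : ℕ} {S : Finset (Fin n)}





lemma Feas.le_one {π : Fin n → ℝ} (h : Feas θ m S π) : ∀ i, π i ≤ 1 := by
  intro i
  by_cases hi : i ∈ S
  · calc π i ≤ ∑ j ∈ S, π j := Finset.single_le_sum (fun j _ => h.1 j) hi
    _ = 1 := h.2.2.1
  · rw [h.2.1 i hi]; norm_num

lemma feas_uniform (hm : 0 < m) (hθ : θ ∈ Set.Ioc (0:ℝ) 1) (hS : S.card = m) :
    Feas θ m S (fun i => if i ∈ S then ((m:ℝ))⁻¹ else 0) := by
  have hm' : (0:ℝ) < m := by exact_mod_cast hm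
  refine ⟨fun i => by positivity, fun i hi => by simp [hi], ?_, fun i => ?_⟩
  · rw [Finset.sum_congr rfl (fun i hi => if_pos hi), Finset.sum_const, hS]
    rw [nsmul_eq_mul]; exact mul_inv_cancel₀ hm'.ne'
  · have hθm : (0:ℝ) < θ * m := by nlinarith [hθ.1]
    have hcap : ((m:ℝ))⁻¹ ≤ 1/(θ*m) := by
      rw [one_div]
      exact inv_anti₀ hθm (by nlinarith [hθ.2])
    by_cases hi : i ∈ S
    · simpa [hi] using hcap
    · simp only [if_neg hi]
      exact (div_pos one_pos hθm).le

lemma isClosed_feas : IsClosed {π : Fin n → ℝ | Feas θ m S π} := by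
  have : {π : Fin n → ℝ | Feas θ m S π} =
      (⋂ i, {π : Fin n → ℝ | 0 ≤ π i}) ∩ ((⋂ i ∈ Sᶜ, {π : Fin n → ℝ | π i = 0}) ∩
      ({π : Fin n → ℝ | ∑ i ∈ S, π i = 1} ∩ ⋂ i, {π : Fin n → ℝ | π i ≤ 1/(θ*m)})) := by
    ext π
    simp [Feas, Set.mem_iInter, forall_and]
  rw [this]
  refine IsClosed.inter (isClosed_iInter fun i => isClosed_le continuous_const (continuous_apply i))
    (IsClosed.inter (isClosed_iInter fun i => isClosed_iInter fun _ =>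
      isClosed_eq (continuous_apply i) continuous_const)
    (IsClosed.inter (isClosed_eq (continuous_finset_sum _ fun i _ => continuous_apply i)
      continuous_const)
    (isClosed_iInter fun i => isClosed_le (continuous_apply i) continuous_const)))

lemma isCompact_feas : IsCompact {π : Fin n → ℝ | Feas θ m S π} := by
  refine IsCompact.of_isClosed_subset (isCompact_Icc (a := fun _ : Fin n => (0:ℝ))
    (b := fun _ => 1)) isClosed_feas ?_
  intro π hπ
  exact ⟨fun i => hπ.1 i, fun i => hπ.le_one i⟩

lemma mul_log_mul_eq (c : ℝ) (hc : c ≠ 0) (x : ℝ) :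
    x * Real.log (x*c) = x * Real.log x + x * Real.log c := by
  rcases eq_or_ne x 0 with h | h
  · simp [h]
  · rw [Real.log_mul h hc]; ring

lemma continuous_obj (u : Fin n → ℝ) (hm : 0 < m) : Continuous (Obj ν m S u) := by
  have hm' : ((m:ℝ)) ≠ 0 := by positivity
  unfold Obj
  refine Continuous.sub (continuous_finset_sum _ fun i _ => (continuous_apply i).mul
    continuous_const) (continuous_const.mul (continuous_finset_sum _ fun i _ => ?_))
  have : (fun π : Fin n → ℝ => π i * Real.log (π i * m)) =
      fun π => π i * Real.log (π i) + π i * Real.log m := by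
    funext π; exact mul_log_mul_eq _ hm' _
  rw [this]
  exact (Real.continuous_mul_log.comp (continuous_apply i)).add
    ((continuous_apply i).mul continuous_const)

lemma exists_maximizer (u : Fin n → ℝ) (hm : 0 < m) (hθ : θ ∈ Set.Ioc (0:ℝ) 1)
    (hS : S.card = m) :
    ∃ π, Feas θ m S π ∧ IsMaxOn (Obj ν m S u) {π | Feas θ m S π} π := by
  obtain ⟨π, hπ, hmax⟩ := isCompact_feas.exists_isMaxOn
    ⟨_, feas_uniform hm hθ hS⟩ (continuous_obj u hm).continuousOn
  exact ⟨π, hπ, hmax⟩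

lemma feas_convex {π π' : Fin n → ℝ} (hπ : Feas θ m S π) (hπ' : Feas θ m S π')
    {t : ℝ} (ht0 : 0 ≤ t) (ht1 : t ≤ 1) :
    Feas θ m S (fun i => π i + t * (π' i - π i)) := by
  obtain ⟨h1, h2, h3, h4⟩ := hπ
  obtain ⟨h1', h2', h3', h4'⟩ := hπ'
  refine ⟨fun i => ?_, fun i hi => ?_, ?_, fun i => ?_⟩
  · dsimp only
    nlinarith [h1 i, h1' i]
  · dsimp only
    rw [h2 i hi, h2' i hi]; ring
  · dsimp only
    simp only [Finset.sum_add_distrib, h3, ← Finset.mul_sum, Finset.sum_sub_distrib, h3']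
    ring
  · dsimp only
    nlinarith [h4 i, h4' i]

lemma obj_shift (u u' π : Fin n → ℝ) :
    Obj ν m S u' π - Obj ν m S u π = ∑ i ∈ S, π i * (u' i - u i) := by
  unfold Obj
  rw [Finset.sum_congr rfl (fun i _ => mul_sub (π i) (u' i) (u i)), Finset.sum_sub_distrib]
  ring







lemma tangent_le {x y c : ℝ} (hx : 0 ≤ x) (hy : 0 < y) (hc : 0 < c) :
    y * Real.log (y*c) - x * Real.log (x*c) ≤ (y - x)*(Real.log (y*c) + 1) := by
  rcases eq_or_lt_of_le hx with h | h
  · rw [← h]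
    simp only [zero_mul, Real.log_zero, mul_zero, sub_zero]
    nlinarith [hy]
  · have hxc : (0:ℝ) < x*c := by positivity
    have hyc : (0:ℝ) < y*c := by positivity
    have h2 : Real.log ((y*c)/(x*c)) ≤ (y*c)/(x*c) - 1 :=
      Real.log_le_sub_one_of_pos (by positivity)
    rw [Real.log_div hyc.ne' hxc.ne'] at h2
    have h4 : (y*c)/(x*c) = y/x := by
      rw [mul_comm y c, mul_comm x c, mul_div_mul_left _ _ hc.ne']
    rw [h4] at h2
    have h5 : x * (Real.log (x*c) - Real.log (y*c)) ≥ x * (1 - y/x) := by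
      apply mul_le_mul_of_nonneg_left _ h.le
      linarith
    have h6 : x * (1 - y/x) = x - y := by field_simp
    nlinarith [h5, h6]

lemma maximizer_pos (hm : 0 < m) (hθ : θ ∈ Set.Ioc (0:ℝ) 1) (hS : S.card = m) (hν : 0 < ν)
    (u π : Fin n → ℝ) (hπ : Feas θ m S π)
    (hmax : IsMaxOn (Obj ν m S u) {π | Feas θ m S π} π) :
    ∀ j ∈ S, 0 < π j := by
  intro j hj
  by_contra hneg
  have hj0 : π j = 0 := le_antisymm (not_lt.1 hneg) (hπ.1 j)
  have hm' : (0:ℝ) < m := by exact_mod_cast hm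
  have hm1 : (1:ℝ) ≤ m := by exact_mod_cast hm
  set π0 : Fin n → ℝ := fun i => if i ∈ S then ((m:ℝ))⁻¹ else 0 with hπ0def
  have hπ0 : Feas θ m S π0 := feas_uniform hm hθ hS
  set U : ℝ := ∑ i ∈ S, (π0 i - π i) * u i with hUdef
  set B : ℝ := ∑ i ∈ S \ {j}, (max (Real.log m) |Real.log (π i * m / 2)| + 1) with hBdef
  set t : ℝ := min (1/2) (Real.exp ((m/ν)*(U - ν*B) - 1)) with htdef
  have ht0 : 0 < t := lt_min (by norm_num) (Real.exp_pos _)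
  have ht2 : t ≤ 1/2 := min_le_left _ _
  have ht1 : t ≤ 1 := ht2.trans (by norm_num)
  have hlogt : Real.log t ≤ (m/ν)*(U - ν*B) - 1 := by
    calc Real.log t ≤ Real.log (Real.exp ((m/ν)*(U - ν*B) - 1)) :=
      Real.log_le_log ht0 (min_le_right _ _)
    _ = _ := Real.log_exp _
  set q : Fin n → ℝ := fun i => π i + t * (π0 i - π i) with hqdef
  have hq : Feas θ m S q := feas_convex hπ hπ0 ht0.le ht1
  have hqi : ∀ i ∈ S, q i = (1-t) * π i + t * ((m:ℝ))⁻¹ := by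
    intro i hi
    simp only [hqdef, hπ0def, if_pos hi]
    ring
  -- entropy bounds
  have hEj : q j * Real.log (q j * m) - π j * Real.log (π j * m) = (t/m) * Real.log t := by
    have : q j = t/m := by rw [hqi j hj, hj0]; ring
    rw [this, hj0]
    have : t/m*m = t := by field_simp
    rw [this]
    simp
  have hE : ∀ i ∈ S \ {j}, q i * Real.log (q i * m) - π i * Real.log (π i * m)
      ≤ t * (max (Real.log m) |Real.log (π i * m / 2)| + 1) := by
    intro i hi
    rw [Finset.mem_sdiff, Finset.mem_singleton] at hi
    obtain ⟨hiS, _⟩ := hi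
    set Bi := max (Real.log m) |Real.log (π i * m / 2)| with hBidef
    have hBi0 : 0 ≤ Bi := le_max_of_le_left (Real.log_nonneg hm1)
    rcases eq_or_lt_of_le (hπ.1 i) with hz | hz
    · -- π i = 0
      have hqit : q i = t/m := by rw [hqi i hiS, ← hz]; ring
      have : q i * Real.log (q i * m) - π i * Real.log (π i * m) = (t/m) * Real.log t := by
        rw [hqit, ← hz]
        have h7 : t/m*m = t := by field_simp
        rw [h7]
        simp
      rw [this]
      have hlt : Real.log t ≤ 0 := Real.log_nonpos ht0.le ht1
      have : (t/m) * Real.log t ≤ 0 := mul_nonpos_of_nonneg_of_nonpos (by positivity) hlt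
      nlinarith
    · -- π i > 0
      have hqpos : 0 < q i := by
        rw [hqi i hiS]
        have : 0 ≤ (1-t) * π i := mul_nonneg (by linarith) hz.le
        have : 0 < t * ((m:ℝ))⁻¹ := by positivity
        linarith
      have htan := tangent_le (hπ.1 i) hqpos hm'
      -- |q i - π i| ≤ t
      have hd1 : |q i - π i| ≤ t := by
        rw [hqi i hiS]
        have h8 : (1-t) * π i + t * ((m:ℝ))⁻¹ - π i = t * (((m:ℝ))⁻¹ - π i) := by ring
        rw [h8, abs_mul, abs_of_pos ht0]
        have : |((m:ℝ))⁻¹ - π i| ≤ 1 := by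
          rw [abs_le]
          constructor
          · have := hπ.le_one i
            have : ((m:ℝ))⁻¹ > 0 := by positivity
            linarith [hπ.le_one i]
          · have hinv1 : ((m:ℝ))⁻¹ ≤ 1 := by
              rw [inv_le_one_iff₀]; right; exact hm1
            linarith [hπ.1 i]
        nlinarith
      -- |log (q i * m)| ≤ Bi
      have hlq : |Real.log (q i * m)| ≤ Bi := by
        rw [abs_le]
        constructor
        · have hlow : π i * m / 2 ≤ q i * m := by
            have : π i / 2 ≤ q i := by
              rw [hqi i hiS]
              nlinarith [hz.le, (by positivity : (0:ℝ) < t * ((m:ℝ))⁻¹)]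
            nlinarith
          have := Real.log_le_log (div_pos (mul_pos hz hm') two_pos) hlow
          have habs : -|Real.log (π i * m / 2)| ≤ Real.log (π i * m / 2) := neg_abs_le _
          have : -Bi ≤ -|Real.log (π i * m / 2)| := by
            simp only [neg_le_neg_iff]
            exact le_max_right _ _
          linarith
        · have hup : q i * m ≤ m := by
            have h11 : q i ≤ 1 := hq.le_one i
            calc q i * m ≤ 1 * m := mul_le_mul_of_nonneg_right h11 hm'.le
            _ = m := one_mul _
          have := Real.log_le_log (mul_pos hqpos hm') hup
          exact this.trans (le_max_left _ _)
      calc q i * Real.log (q i * m) - π i * Real.log (π i * m)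
          ≤ (q i - π i) * (Real.log (q i * m) + 1) := htan
        _ ≤ |q i - π i| * |Real.log (q i * m) + 1| := by
            exact le_trans (le_abs_self _) (le_of_eq (abs_mul _ _))
        _ ≤ t * (Bi + 1) := by
            apply mul_le_mul hd1 _ (abs_nonneg _) ht0.le
            calc |Real.log (q i * m) + 1| ≤ |Real.log (q i * m)| + 1 := by
                  exact (abs_add_le _ _).trans (by simp)
              _ ≤ Bi + 1 := by linarith
  -- sum the entropy bounds
  have hsumE : ∑ i ∈ S, (q i * Real.log (q i * m) - π i * Real.log (π i * m))
      ≤ (t/m) * Real.log t + t * B := by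
    rw [Finset.sum_eq_sum_sdiff_singleton_add hj]
    have h9 : ∑ i ∈ S \ {j}, (q i * Real.log (q i * m) - π i * Real.log (π i * m))
        ≤ t * B := by
      rw [hBdef, Finset.mul_sum]
      exact Finset.sum_le_sum hE
    rw [hEj]
    linarith
  -- gap computation
  have gap : Obj ν m S u q - Obj ν m S u π = (∑ i ∈ S, (q i - π i) * u i)
      - ν * ∑ i ∈ S, (q i * Real.log (q i * m) - π i * Real.log (π i * m)) := by
    unfold Obj
    simp only [sub_mul, Finset.sum_sub_distrib, mul_sub]
    ring
  have hsumU : ∑ i ∈ S, (q i - π i) * u i = t * U := by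
    rw [hUdef, Finset.mul_sum]
    apply Finset.sum_congr rfl
    intro i _
    simp only [hqdef]
    ring
  have h1 : Obj ν m S u q - Obj ν m S u π ≥ t*U - ν*((t/m)*Real.log t + t*B) := by
    rw [gap, hsumU]
    have := mul_le_mul_of_nonneg_left hsumE hν.le
    linarith
  have h3 : U - ν*B - (ν/m)*Real.log t ≥ ν/m := by
    have h10 := mul_le_mul_of_nonneg_left hlogt (by positivity : (0:ℝ) ≤ ν/m)
    have heq : (ν/m)*((m/ν)*(U - ν*B) - 1) = (U - ν*B) - ν/m := by
      field_simp
    rw [heq] at h10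
    linarith
  have h2 : t*U - ν*((t/m)*Real.log t + t*B) = t*(U - ν*B - (ν/m)*Real.log t) := by
    ring
  have h4 : t*(U - ν*B - (ν/m)*Real.log t) ≥ t*(ν/m) :=
    mul_le_mul_of_nonneg_left h3 ht0.le
  have h5 : (0:ℝ) < t*(ν/m) := mul_pos ht0 (div_pos hν hm')
  have h6 : Obj ν m S u q ≤ Obj ν m S u π := isMaxOn_iff.1 hmax q hq
  linarith







/-- Variational inequality at a positive maximizer. -/
lemma variational_ineq (hm : 0 < m) (hν : 0 < ν)
    (u π π' : Fin n → ℝ) (hπ : Feas θ m S π) (hpos : ∀ i ∈ S, 0 < π i)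
    (hπ' : Feas θ m S π')
    (hmax : IsMaxOn (Obj ν m S u) {π | Feas θ m S π} π) :
    ∑ i ∈ S, (π' i - π i) * (u i - ν * Real.log (π i)) ≤ 0 := by
  have hm' : (0:ℝ) < m := by exact_mod_cast hm
  set φ : ℝ → ℝ := fun t => Obj ν m S u (fun i => π i + t * (π' i - π i)) with hφdef
  set D : ℝ := (∑ i ∈ S, (π' i - π i) * u i)
      - ν * ∑ i ∈ S, (π' i - π i) * (Real.log (π i * m) + 1) with hDdef
  have hderiv : HasDerivAt φ D 0 := by
    have h1 : HasDerivAt (fun t : ℝ => ∑ i ∈ S, (π i + t * (π' i - π i)) * u i)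
        (∑ i ∈ S, (π' i - π i) * u i) 0 := by
      apply HasDerivAt.fun_sum
      intro i _
      have : HasDerivAt (fun t : ℝ => (π i + t * (π' i - π i))) (π' i - π i) 0 := by
        simpa [mul_comm] using ((hasDerivAt_id (0:ℝ)).const_mul (π' i - π i)).const_add (π i)
      simpa using this.mul_const (u i)
    have h2 : HasDerivAt (fun t : ℝ => ∑ i ∈ S, (π i + t * (π' i - π i)) *
        Real.log ((π i + t * (π' i - π i)) * m))
        (∑ i ∈ S, (π' i - π i) * (Real.log (π i * m) + 1)) 0 := by
      apply HasDerivAt.fun_sum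
      intro i hi
      have hpi : 0 < π i := hpos i hi
      have hc : HasDerivAt (fun t : ℝ => (π i + t * (π' i - π i))) (π' i - π i) 0 := by
        simpa [mul_comm] using ((hasDerivAt_id (0:ℝ)).const_mul (π' i - π i)).const_add (π i)
      have hcm : HasDerivAt (fun t : ℝ => (π i + t * (π' i - π i)) * m)
          ((π' i - π i) * m) 0 := hc.mul_const _
      have hne : (fun t : ℝ => (π i + t * (π' i - π i)) * m) 0 ≠ 0 := by
        simp only [zero_mul, add_zero]
        exact (mul_pos hpi hm').ne'
      have hlog := hcm.log hne
      have hmul := hc.fun_mul hlog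
      convert hmul using 1
      case e'_4 => rfl
      simp only [zero_mul, add_zero]
      field_simp
    exact h1.sub (h2.const_mul ν)
  have hmaxφ : IsMaxOn φ (Set.Icc 0 1) 0 := by
    intro t ht
    simp only [Set.mem_Icc] at ht
    have := isMaxOn_iff.1 hmax _ (feas_convex hπ hπ' ht.1 ht.2)
    simpa [hφdef] using this
  have hD0 : D ≤ 0 := by
    have h1 := (hmaxφ.localize).hasFDerivWithinAt_nonpos
      (hderiv.hasFDerivAt.hasFDerivWithinAt)
      (y := 1) ?_
    · simpa using h1
    · apply mem_posTangentConeAt_of_segment_subset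
      rw [show (0:ℝ) + 1 = 1 by norm_num, segment_eq_Icc (by norm_num : (0:ℝ) ≤ 1)]
  -- rewrite D
  have hsum0 : ∑ i ∈ S, (π' i - π i) = 0 := by
    rw [Finset.sum_sub_distrib, hπ.2.2.1, hπ'.2.2.1]
    ring
  have hD2 : D = (∑ i ∈ S, (π' i - π i) * (u i - ν * Real.log (π i)))
      - ν * (Real.log m + 1) * ∑ i ∈ S, (π' i - π i) := by
    rw [hDdef]
    simp only [Finset.mul_sum]
    rw [← Finset.sum_sub_distrib, ← Finset.sum_sub_distrib]
    apply Finset.sum_congr rfl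
    intro i hi
    rw [Real.log_mul (hpos i hi).ne' hm'.ne']
    ring
  rw [hsum0] at hD2
  simp only [mul_zero, sub_zero] at hD2
  linarith [hD0, hD2.symm.le]







/-- Quantitative stability of maximizers. -/
lemma stability (hm : 0 < m) (hθ : θ ∈ Set.Ioc (0:ℝ) 1) (hS : S.card = m) (hν : 0 < ν)
    (u u' π π' : Fin n → ℝ) (hπ : Feas θ m S π) (hπ' : Feas θ m S π')
    (hmax : IsMaxOn (Obj ν m S u) {π | Feas θ m S π} π)
    (hmax' : IsMaxOn (Obj ν m S u') {π | Feas θ m S π} π') :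
    ν * (∑ i ∈ S, |π i - π' i|)^2 ≤ ∑ i ∈ S, (π i - π' i) * (u i - u' i) := by
  have hpos := maximizer_pos hm hθ hS hν u π hπ hmax
  have hpos' := maximizer_pos hm hθ hS hν u' π' hπ' hmax'
  have h1 := variational_ineq hm hν u π π' hπ hpos hπ' hmax
  have h2 := variational_ineq hm hν u' π' π hπ' hpos' hπ hmax'
  have hkey : ∑ i ∈ S, (π i - π' i) * (u i - u' i)
      - ν * ∑ i ∈ S, (π i - π' i) * (Real.log (π i) - Real.log (π' i))
      = - (∑ i ∈ S, (π' i - π i) * (u i - ν * Real.log (π i)))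
        - (∑ i ∈ S, (π i - π' i) * (u' i - ν * Real.log (π' i))) := by
    simp only [Finset.mul_sum, ← Finset.sum_neg_distrib, ← Finset.sum_sub_distrib]
    apply Finset.sum_congr rfl
    intro i _
    ring
  have hp := pinsker_sum S π π' hpos hpos' hπ.2.2.1 hπ'.2.2.1
  have hp2 := mul_le_mul_of_nonneg_left hp hν.le
  linarith

lemma maximizer_unique (hm : 0 < m) (hθ : θ ∈ Set.Ioc (0:ℝ) 1) (hS : S.card = m) (hν : 0 < ν)
    (u π π' : Fin n → ℝ) (hπ : Feas θ m S π) (hπ' : Feas θ m S π')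
    (hmax : IsMaxOn (Obj ν m S u) {π | Feas θ m S π} π)
    (hmax' : IsMaxOn (Obj ν m S u) {π | Feas θ m S π} π') :
    π = π' := by
  have h := stability hm hθ hS hν u u π π' hπ hπ' hmax hmax'
  simp only [sub_self, mul_zero, Finset.sum_const_zero] at h
  have hsum : ∑ i ∈ S, |π i - π' i| = 0 := by
    have h0 : 0 ≤ ∑ i ∈ S, |π i - π' i| := Finset.sum_nonneg fun i _ => abs_nonneg _
    by_contra hne
    have hpos2 : 0 < ∑ i ∈ S, |π i - π' i| := lt_of_le_of_ne h0 (Ne.symm hne)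
    have : 0 < ν * (∑ i ∈ S, |π i - π' i|)^2 := mul_pos hν (pow_pos hpos2 2)
    linarith
  have hzero : ∀ i ∈ S, |π i - π' i| = 0 :=
    (Finset.sum_eq_zero_iff_of_nonneg (fun i _ => abs_nonneg _)).1 hsum
  funext i
  by_cases hi : i ∈ S
  · have := hzero i hi
    rw [abs_eq_zero, sub_eq_zero] at this
    exact this
  · rw [hπ.2.1 i hi, hπ'.2.1 i hi]

/-- ℓ¹ bound on maximizer shift. -/
lemma l1_bound (hm : 0 < m) (hθ : θ ∈ Set.Ioc (0:ℝ) 1) (hS : S.card = m) (hν : 0 < ν)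
    (u u' π π' : Fin n → ℝ) (hπ : Feas θ m S π) (hπ' : Feas θ m S π')
    (hmax : IsMaxOn (Obj ν m S u) {π | Feas θ m S π} π)
    (hmax' : IsMaxOn (Obj ν m S u') {π | Feas θ m S π} π')
    (c M : ℝ) (hM : ∀ i ∈ S, |u i - u' i - c| ≤ M) :
    ∑ i ∈ S, |π i - π' i| ≤ M / ν := by
  set ℓ : ℝ := ∑ i ∈ S, |π i - π' i| with hl
  have hl0 : 0 ≤ ℓ := Finset.sum_nonneg fun i _ => abs_nonneg _
  have hst := stability hm hθ hS hν u u' π π' hπ hπ' hmax hmax'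
  have hshift : ∑ i ∈ S, (π i - π' i) * (u i - u' i)
      = ∑ i ∈ S, (π i - π' i) * (u i - u' i - c) := by
    simp only [mul_sub, Finset.sum_sub_distrib, ← Finset.sum_mul]
    rw [hπ.2.2.1, hπ'.2.2.1]
    ring
  have hub : ∑ i ∈ S, (π i - π' i) * (u i - u' i - c) ≤ M * ℓ := by
    rw [hl, Finset.mul_sum]
    apply Finset.sum_le_sum
    intro i hi
    calc (π i - π' i) * (u i - u' i - c) ≤ |(π i - π' i) * (u i - u' i - c)| := le_abs_self _
      _ = |π i - π' i| * |u i - u' i - c| := abs_mul _ _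
      _ ≤ |π i - π' i| * M := mul_le_mul_of_nonneg_left (hM i hi) (abs_nonneg _)
      _ = M * |π i - π' i| := mul_comm _ _
  have hM0 : 0 ≤ M := by
    obtain ⟨j, hj⟩ := Finset.card_pos.1 (hS ▸ hm)
    exact (abs_nonneg _).trans (hM j hj)
  rcases eq_or_lt_of_le hl0 with h0 | h0
  · rw [← h0]
    positivity
  · have : ν * ℓ^2 ≤ M * ℓ := by
      rw [hshift] at hst
      linarith
    rw [le_div_iff₀ hν]
    nlinarith

end SPSAux

section AnalyticAux
variable {d : ℕ}
local notation "E" => EuclideanSpace ℝ (Fin d)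


/-- Gradient norm bound from Lipschitzness. -/
lemma grad_norm_le {f : E → ℝ} {G : ℝ} (hG : 0 ≤ G)
    (hlip : ∀ v v', |f v - f v'| ≤ G * ‖v - v'‖) (hd : ∀ v, DifferentiableAt ℝ f v)
    (v : E) : ‖gradient f v‖ ≤ G := by
  have hlw : LipschitzWith (G.toNNReal) f := by
    apply LipschitzWith.of_dist_le_mul
    intro x y
    rw [Real.dist_eq, dist_eq_norm, Real.coe_toNNReal G hG]
    exact hlip x y
  have h1 : HasFDerivAt f (toDual ℝ E (gradient f v)) v := ((hd v).hasGradientAt).hasFDerivAt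
  have h2 := h1.le_of_lipschitz hlw
  rw [Real.coe_toNNReal G hG] at h2
  calc ‖gradient f v‖ = ‖toDual ℝ E (gradient f v)‖ := ((toDual ℝ E).norm_map _).symm
  _ ≤ G := h2

/-- Quadratic Taylor bound from Lipschitz gradient. -/
lemma taylor_bound {f : E → ℝ} {L : ℝ} (hL : 0 ≤ L)
    (hd : ∀ v, DifferentiableAt ℝ f v)
    (hlip : ∀ v v', ‖gradient f v - gradient f v'‖ ≤ L * ‖v - v'‖)
    (v v' : E) :
    |f v' - f v - inner ℝ (gradient f v) (v' - v)| ≤ L * ‖v' - v‖^2 := by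
  set g : E → ℝ := fun z => f z - inner ℝ (gradient f v) z with hgdef
  have hgd : ∀ z, HasFDerivAt g (toDual ℝ E (gradient f z - gradient f v)) z := by
    intro z
    have h1 : HasFDerivAt f (toDual ℝ E (gradient f z)) z := ((hd z).hasGradientAt).hasFDerivAt
    have h2 : HasFDerivAt (fun z : E => (inner ℝ (gradient f v) z : ℝ))
        (toDual ℝ E (gradient f v)) z := by
      have h0 := (toDual ℝ E (gradient f v)).hasFDerivAt (x := z)
      have heq : ⇑(toDual ℝ E (gradient f v)) = fun z : E => (inner ℝ (gradient f v) z : ℝ) := by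
        funext y
        exact toDual_apply_apply
      rwa [heq] at h0
    have := h1.sub h2
    rwa [← map_sub] at this
  have hseg : ∀ z ∈ segment ℝ v v', ‖toDual ℝ E (gradient f z - gradient f v)‖ ≤ L * ‖v' - v‖ := by
    intro z hz
    rw [(toDual ℝ E).norm_map]
    obtain ⟨a, b, ha, hb, hab, rfl⟩ := hz
    have hzv : a • v + b • v' - v = b • (v' - v) := by
      rw [show a = 1 - b by linarith]
      module
    calc ‖gradient f (a • v + b • v') - gradient f v‖ ≤ L * ‖a • v + b • v' - v‖ := hlip _ _
    _ = L * (b * ‖v' - v‖) := by rw [hzv, norm_smul, Real.norm_of_nonneg hb]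
    _ ≤ L * (1 * ‖v' - v‖) := by
        apply mul_le_mul_of_nonneg_left _ hL
        apply mul_le_mul_of_nonneg_right _ (norm_nonneg _)
        linarith
    _ = L * ‖v' - v‖ := by rw [one_mul]
  have := Convex.norm_image_sub_le_of_norm_hasFDerivWithin_le
    (f := g) (f' := fun z => toDual ℝ E (gradient f z - gradient f v))
    (fun z _ => (hgd z).hasFDerivWithinAt) hseg (convex_segment v v')
    (left_mem_segment ℝ v v') (right_mem_segment ℝ v v')
  have heq : g v' - g v = f v' - f v - inner ℝ (gradient f v) (v' - v) := by
    simp only [hgdef]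
    rw [inner_sub_right]
    ring
  rw [heq] at this
  calc |f v' - f v - inner ℝ (gradient f v) (v' - v)| ≤ L * ‖v' - v‖ * ‖v' - v‖ := by
        simpa [Real.norm_eq_abs] using this
  _ = L * ‖v' - v‖^2 := by ring

/-- Gradient of `z ↦ c/2 ‖z‖²`. -/
lemma hasGradientAt_quad (c : ℝ) (v : E) :
    HasGradientAt (fun z : E => c/2 * ‖z‖^2) (c • v) v := by
  rw [hasGradientAt_iff_hasFDerivAt]
  have h1 : HasFDerivAt (fun z : E => ‖z‖^2) (2 • (innerSL ℝ v)) v :=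
    (hasStrictFDerivAt_norm_sq v).hasFDerivAt
  have h2 := h1.const_mul (c/2)
  convert h2 using 1
  case e'_9 => rfl
  ext y
  simp only [toDual_apply_apply, ContinuousLinearMap.smul_apply, ContinuousLinearMap.coe_smul',
    Pi.smul_apply, innerSL_apply_apply, smul_eq_mul]
  rw [real_inner_smul_left]
  ring

lemma isLittleO_of_quad {e : E → ℝ} {v : E} {C : ℝ}
    (h : ∀ᶠ v' in nhds v, |e v'| ≤ C * ‖v' - v‖^2) :
    (fun v' => e v') =o[nhds v] fun v' => v' - v := by
  rw [Asymptotics.isLittleO_iff]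
  intro c hc
  have htend : Filter.Tendsto (fun v' : E => ‖v' - v‖) (nhds v) (nhds 0) := by
    have : Continuous fun v' : E => ‖v' - v‖ := (continuous_id.sub continuous_const).norm
    have h0 : ‖v - v‖ = 0 := by simp
    simpa [h0] using this.tendsto v
  have h2 : ∀ᶠ v' in nhds v, ‖v' - v‖ < c / (|C| + 1) := by
    apply htend.eventually_lt_const
    positivity
  filter_upwards [h, h2] with v' h1 h2
  rw [Real.norm_eq_abs]
  have hn : (0:ℝ) ≤ ‖v' - v‖ := norm_nonneg _
  calc |e v'| ≤ C * ‖v' - v‖^2 := h1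
  _ ≤ (|C| + 1) * (‖v' - v‖ * ‖v' - v‖) := by nlinarith [le_abs_self C, abs_nonneg C]
  _ ≤ (|C| + 1) * ((c / (|C| + 1)) * ‖v' - v‖) := by
      apply mul_le_mul_of_nonneg_left _ (by positivity)
      exact mul_le_mul_of_nonneg_right h2.le hn
  _ = c * ‖v' - v‖ := by field_simp
  _ ≤ c * ‖v' - v‖ := le_rfl


end AnalyticAux
/-- Properties of the smoothed partial superquantile
`h(v) = max_{π ∈ P_{θ,S}} ( ∑_{i∈S} π i F̃ i v − ν D_S(π) )` with `F̃_i = F_i + (λ/2)‖·‖²`: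
for each `v` the maximizer is unique, `h` is continuously differentiable with
`∇h(v) = ∑_{i∈S} π*_i(v) ∇F̃_i(v)`, and `h` is `L'`-smooth with `L' = L + λ + G²/ν`. -/
theorem smoothed_partial_superquantile_properties
    (d n m : ℕ) (hm : 0 < m)
    (θ lam ν G L : ℝ) (hθ : θ ∈ Set.Ioc (0:ℝ) 1) (hlam : 0 ≤ lam) (hν : 0 < ν)
    (hG : 0 ≤ G) (hL : 0 ≤ L)
    (S : Finset (Fin n)) (hS : S.card = m)
    (F : Fin n → EuclideanSpace ℝ (Fin d) → ℝ)
    (hFlip : ∀ i v v', |F i v - F i v'| ≤ G * ‖v - v'‖)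
    (hFc1 : ∀ i, ContDiff ℝ 1 (F i))
    (hFgrad : ∀ i v v', ‖gradient (F i) v - gradient (F i) v'‖ ≤ L * ‖v - v'‖) :
    ∀ h : EuclideanSpace ℝ (Fin d) → ℝ,
      h = (fun v => sSup {x : ℝ | ∃ π : Fin n → ℝ, (∀ i, 0 ≤ π i) ∧ (∀ i ∉ S, π i = 0) ∧
        (∑ i ∈ S, π i = 1) ∧ (∀ i, π i ≤ 1 / (θ * m)) ∧
        x = (∑ i ∈ S, π i * (F i v + lam / 2 * ‖v‖ ^ 2))
          - ν * ∑ i ∈ S, π i * Real.log (π i * m)}) →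
    (∀ v, ∃! π : Fin n → ℝ, (∀ i, 0 ≤ π i) ∧ (∀ i ∉ S, π i = 0) ∧
        (∑ i ∈ S, π i = 1) ∧ (∀ i, π i ≤ 1 / (θ * m)) ∧
        (∑ i ∈ S, π i * (F i v + lam / 2 * ‖v‖ ^ 2))
          - ν * ∑ i ∈ S, π i * Real.log (π i * m) = h v) ∧
    ContDiff ℝ 1 h ∧
    (∀ v, ∀ π : Fin n → ℝ, (∀ i, 0 ≤ π i) → (∀ i ∉ S, π i = 0) →
      (∑ i ∈ S, π i = 1) → (∀ i, π i ≤ 1 / (θ * m)) →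
      (∑ i ∈ S, π i * (F i v + lam / 2 * ‖v‖ ^ 2))
        - ν * ∑ i ∈ S, π i * Real.log (π i * m) = h v →
      gradient h v = ∑ i ∈ S, π i • gradient (fun z => F i z + lam / 2 * ‖z‖ ^ 2) v) ∧
    (∀ v v', ‖gradient h v - gradient h v'‖ ≤ (L + lam + G ^ 2 / ν) * ‖v - v'‖) := by
  intro h hh
  have hθ' : θ ∈ Set.Ioc (0:ℝ) 1 := hθ
  have hm' : (0:ℝ) < m := by exact_mod_cast hm
  set u : EuclideanSpace ℝ (Fin d) → Fin n → ℝ := fun v i => F i v + lam / 2 * ‖v‖ ^ 2 with hu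
  have hex : ∀ v : EuclideanSpace ℝ (Fin d),
      ∃ π, Feas θ m S π ∧ IsMaxOn (Obj ν m S (u v)) {π | Feas θ m S π} π :=
    fun v => exists_maximizer (u v) hm hθ' hS
  set P : EuclideanSpace ℝ (Fin d) → Fin n → ℝ := fun v => Classical.choose (hex v) with hP
  have hPfeas : ∀ v, Feas θ m S (P v) := fun v => (Classical.choose_spec (hex v)).1
  have hPmax : ∀ v, IsMaxOn (Obj ν m S (u v)) {π | Feas θ m S π} (P v) :=
    fun v => (Classical.choose_spec (hex v)).2
  have hval : ∀ v, h v = Obj ν m S (u v) (P v) := by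
    intro v
    rw [hh]
    dsimp only
    apply IsGreatest.csSup_eq
    constructor
    · exact Set.mem_setOf.2 ⟨P v, (hPfeas v).1, (hPfeas v).2.1, (hPfeas v).2.2.1,
        (hPfeas v).2.2.2, rfl⟩
    · rintro x ⟨π, h1, h2, h3, h4, rfl⟩
      exact isMaxOn_iff.1 (hPmax v) π ⟨h1, h2, h3, h4⟩
  have hchar : ∀ v (π : Fin n → ℝ), (∀ i, 0 ≤ π i) → (∀ i ∉ S, π i = 0) →
      (∑ i ∈ S, π i = 1) → (∀ i, π i ≤ 1 / (θ * m)) →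
      (∑ i ∈ S, π i * (F i v + lam / 2 * ‖v‖ ^ 2))
        - ν * ∑ i ∈ S, π i * Real.log (π i * m) = h v →
      π = P v := by
    intro v π h1 h2 h3 h4 h5
    have hfeas : Feas θ m S π := ⟨h1, h2, h3, h4⟩
    have hobj : Obj ν m S (u v) π = Obj ν m S (u v) (P v) := by
      rw [← hval v]; exact h5
    have hmaxπ : IsMaxOn (Obj ν m S (u v)) {π | Feas θ m S π} π := by
      rw [isMaxOn_iff]
      intro q hq
      calc Obj ν m S (u v) q ≤ Obj ν m S (u v) (P v) := isMaxOn_iff.1 (hPmax v) q hq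
      _ = Obj ν m S (u v) π := hobj.symm
    exact maximizer_unique hm hθ' hS hν (u v) π (P v) hfeas (hPfeas v) hmaxπ (hPmax v)
  -- gradients of components
  have hFdiff : ∀ (i : Fin n), Differentiable ℝ (F i) := fun i => (hFc1 i).differentiable one_ne_zero
  have hFd : ∀ (i : Fin n) v, HasGradientAt (F i) (gradient (F i) v) v :=
    fun i v => ((hFdiff i) v).hasGradientAt
  have hfgrad : ∀ (i : Fin n) (v : EuclideanSpace ℝ (Fin d)),
      HasGradientAt (fun z => F i z + lam / 2 * ‖z‖ ^ 2) (gradient (F i) v + lam • v) v := by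
    intro i v
    rw [hasGradientAt_iff_hasFDerivAt, map_add]
    exact (hFd i v).hasFDerivAt.add (hasGradientAt_quad lam v).hasFDerivAt
  have hfgradval : ∀ (i : Fin n) v, gradient (fun z => F i z + lam / 2 * ‖z‖ ^ 2) v
      = gradient (F i) v + lam • v := fun i v => (hfgrad i v).gradient
  have hGnorm : ∀ (i : Fin n) v, ‖gradient (F i) v‖ ≤ G :=
    fun i v => grad_norm_le hG (hFlip i) (fun w => (hFdiff i) w) v
  set gr : EuclideanSpace ℝ (Fin d) → EuclideanSpace ℝ (Fin d) :=
    fun v => ∑ i ∈ S, P v i • (gradient (F i) v + lam • v) with hgr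
  have hnormsq : ∀ v v' : EuclideanSpace ℝ (Fin d),
      ‖v'‖^2 = ‖v‖^2 + 2 * inner ℝ v (v'-v) + ‖v'-v‖^2 := by
    intro v v'
    have hvv : v + (v' - v) = v' := by abel
    have h0 := norm_add_sq_real v (v' - v)
    rw [hvv] at h0
    exact h0
  have hPl1 : ∀ v v', ∑ i ∈ S, |P v i - P v' i| ≤ G * ‖v - v'‖ / ν := by
    intro v v'
    apply l1_bound hm hθ' hS hν (u v) (u v') (P v) (P v') (hPfeas v) (hPfeas v')
      (hPmax v) (hPmax v') (lam / 2 * (‖v‖^2 - ‖v'‖^2)) (G * ‖v - v'‖)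
    intro i _
    have heq : u v i - u v' i - lam / 2 * (‖v‖^2 - ‖v'‖^2) = F i v - F i v' := by
      simp only [hu]; ring
    rw [heq]
    exact hFlip i v v'
  -- Lipschitz continuity of gr
  have hgrlip : ∀ v v', ‖gr v - gr v'‖ ≤ (L + lam + G^2/ν) * ‖v - v'‖ := by
    intro v v'
    have hsum0 : ∑ i ∈ S, (P v i - P v' i) = 0 := by
      rw [Finset.sum_sub_distrib, (hPfeas v).2.2.1, (hPfeas v').2.2.1]; ring
    have key : ∀ i ∈ S, P v i • (gradient (F i) v + lam • v)
        - P v' i • (gradient (F i) v' + lam • v')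
        = P v i • ((gradient (F i) v + lam • v) - (gradient (F i) v' + lam • v'))
          + ((P v i - P v' i) • (gradient (F i) v') + (P v i - P v' i) • (lam • v')) := by
      intro i _
      module
    have hsplit : gr v - gr v' =
        (∑ i ∈ S, P v i • ((gradient (F i) v + lam • v) - (gradient (F i) v' + lam • v')))
        + ∑ i ∈ S, (P v i - P v' i) • (gradient (F i) v') := by
      simp only [hgr]
      rw [← Finset.sum_sub_distrib, Finset.sum_congr rfl key, Finset.sum_add_distrib,
        Finset.sum_add_distrib, ← Finset.sum_smul, hsum0, zero_smul, add_zero]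
    rw [hsplit]
    have hT1 : ‖∑ i ∈ S, P v i • ((gradient (F i) v + lam • v) - (gradient (F i) v' + lam • v'))‖
        ≤ (L + lam) * ‖v - v'‖ := by
      calc ‖∑ i ∈ S, P v i • ((gradient (F i) v + lam • v) - (gradient (F i) v' + lam • v'))‖
          ≤ ∑ i ∈ S, ‖P v i • ((gradient (F i) v + lam • v) - (gradient (F i) v' + lam • v'))‖ :=
            norm_sum_le _ _
      _ ≤ ∑ i ∈ S, P v i * ((L + lam) * ‖v - v'‖) := by
          apply Finset.sum_le_sum
          intro i _
          rw [norm_smul, Real.norm_of_nonneg ((hPfeas v).1 i)]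
          apply mul_le_mul_of_nonneg_left _ ((hPfeas v).1 i)
          have e2 : (gradient (F i) v + lam • v) - (gradient (F i) v' + lam • v')
              = (gradient (F i) v - gradient (F i) v') + lam • (v - v') := by module
          rw [e2]
          calc ‖(gradient (F i) v - gradient (F i) v') + lam • (v - v')‖
              ≤ ‖gradient (F i) v - gradient (F i) v'‖ + ‖lam • (v - v')‖ := norm_add_le _ _
          _ ≤ L * ‖v - v'‖ + lam * ‖v - v'‖ := by
              rw [norm_smul, Real.norm_of_nonneg hlam]
              exact add_le_add (hFgrad i v v') le_rfl
          _ = (L + lam) * ‖v - v'‖ := by ring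
      _ = (L + lam) * ‖v - v'‖ := by
          rw [← Finset.sum_mul, (hPfeas v).2.2.1, one_mul]
    have hT2 : ‖∑ i ∈ S, (P v i - P v' i) • gradient (F i) v'‖ ≤ G^2/ν * ‖v - v'‖ := by
      calc ‖∑ i ∈ S, (P v i - P v' i) • gradient (F i) v'‖
          ≤ ∑ i ∈ S, ‖(P v i - P v' i) • gradient (F i) v'‖ := norm_sum_le _ _
      _ ≤ ∑ i ∈ S, |P v i - P v' i| * G := by
          apply Finset.sum_le_sum
          intro i _
          rw [norm_smul, Real.norm_eq_abs]
          exact mul_le_mul_of_nonneg_left (hGnorm i v') (abs_nonneg _)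
      _ = (∑ i ∈ S, |P v i - P v' i|) * G := (Finset.sum_mul _ _ _).symm
      _ ≤ (G * ‖v - v'‖ / ν) * G := mul_le_mul_of_nonneg_right (hPl1 v v') hG
      _ = G^2/ν * ‖v - v'‖ := by ring
    calc ‖(∑ i ∈ S, P v i • ((gradient (F i) v + lam • v) - (gradient (F i) v' + lam • v')))
        + ∑ i ∈ S, (P v i - P v' i) • gradient (F i) v'‖
        ≤ ‖∑ i ∈ S, P v i • ((gradient (F i) v + lam • v) - (gradient (F i) v' + lam • v'))‖
          + ‖∑ i ∈ S, (P v i - P v' i) • gradient (F i) v'‖ := norm_add_le _ _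
    _ ≤ (L + lam) * ‖v - v'‖ + G^2/ν * ‖v - v'‖ := add_le_add hT1 hT2
    _ = (L + lam + G^2/ν) * ‖v - v'‖ := by ring
  -- differentiability of h
  have hgradh : ∀ v, HasGradientAt h (gr v) v := by
    intro v
    rw [hasGradientAt_iff_hasFDerivAt]
    apply HasFDerivAt.of_isLittleO
    apply isLittleO_of_quad (C := L + lam/2 + (G + lam/2*(2*‖v‖+1))^2/ν)
    filter_upwards [Metric.ball_mem_nhds v one_pos] with v' hv'
    have hdist : ‖v' - v‖ < 1 := by rwa [Metric.mem_ball, dist_eq_norm] at hv'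
    have hid : (toDual ℝ (EuclideanSpace ℝ (Fin d)) (gr v)) (v' - v)
        = inner ℝ (gr v) (v' - v) := toDual_apply_apply
    rw [hid]
    set Sd : ℝ := ∑ i ∈ S, P v i * (u v' i - u v i) with hSd
    -- A part
    have hinnergr : (inner ℝ (gr v) (v' - v) : ℝ)
        = ∑ i ∈ S, P v i * inner ℝ (gradient (F i) v + lam • v) (v' - v) := by
      simp only [hgr]
      rw [sum_inner]
      apply Finset.sum_congr rfl
      intro i _
      rw [real_inner_smul_left]
    have hApt : ∀ i ∈ S, |u v' i - u v i - inner ℝ (gradient (F i) v + lam • v) (v' - v)|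
        ≤ (L + lam/2) * ‖v' - v‖^2 := by
      intro i _
      have htay := taylor_bound hL (fun w => (hFdiff i) w) (hFgrad i) v v'
      have hq2 : lam/2 * ‖v'‖^2 - lam/2 * ‖v‖^2 - lam * inner ℝ v (v' - v)
          = lam/2 * ‖v' - v‖^2 := by
        have h8 := hnormsq v v'
        linear_combination (lam/2) * h8
      have hinner2 : (inner ℝ (gradient (F i) v + lam • v) (v' - v) : ℝ)
          = inner ℝ (gradient (F i) v) (v' - v) + lam * inner ℝ v (v' - v) := by
        rw [inner_add_left, real_inner_smul_left]
      have hrewrite : u v' i - u v i - inner ℝ (gradient (F i) v + lam • v) (v' - v)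
          = (F i v' - F i v - inner ℝ (gradient (F i) v) (v' - v)) + lam/2 * ‖v' - v‖^2 := by
        rw [hinner2]
        simp only [hu]
        linear_combination hq2
      rw [hrewrite]
      calc |(F i v' - F i v - inner ℝ (gradient (F i) v) (v' - v)) + lam/2 * ‖v' - v‖^2|
          ≤ |F i v' - F i v - inner ℝ (gradient (F i) v) (v' - v)| + |lam/2 * ‖v' - v‖^2| :=
            abs_add_le _ _
      _ ≤ L * ‖v' - v‖^2 + lam/2 * ‖v' - v‖^2 := by
          refine add_le_add htay ?_
          rw [abs_of_nonneg (mul_nonneg (by linarith) (sq_nonneg _))]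
      _ = (L + lam/2) * ‖v' - v‖^2 := by ring
    have hA : |Sd - inner ℝ (gr v) (v' - v)| ≤ (L + lam/2) * ‖v' - v‖^2 := by
      have e3 : Sd - inner ℝ (gr v) (v' - v)
          = ∑ i ∈ S, P v i * (u v' i - u v i - inner ℝ (gradient (F i) v + lam • v) (v' - v)) := by
        rw [hSd, hinnergr, ← Finset.sum_sub_distrib]
        apply Finset.sum_congr rfl
        intro i _
        ring
      rw [e3]
      calc |∑ i ∈ S, P v i * (u v' i - u v i - inner ℝ (gradient (F i) v + lam • v) (v' - v))|
          ≤ ∑ i ∈ S, |P v i * (u v' i - u v i - inner ℝ (gradient (F i) v + lam • v) (v' - v))| :=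
            Finset.abs_sum_le_sum_abs _ _
      _ ≤ ∑ i ∈ S, P v i * ((L + lam/2) * ‖v' - v‖^2) := by
          apply Finset.sum_le_sum
          intro i hi
          rw [abs_mul, abs_of_nonneg ((hPfeas v).1 i)]
          exact mul_le_mul_of_nonneg_left (hApt i hi) ((hPfeas v).1 i)
      _ = (L + lam/2) * ‖v' - v‖^2 := by
          rw [← Finset.sum_mul, (hPfeas v).2.2.1, one_mul]
    -- B part
    have hBl : 0 ≤ h v' - h v - Sd := by
      have e1 : Obj ν m S (u v') (P v) = Obj ν m S (u v) (P v) + Sd := by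
        have h9 := obj_shift (ν := ν) (m := m) (S := S) (u v) (u v') (P v)
        rw [hSd]; linarith
      have e2 : Obj ν m S (u v') (P v) ≤ h v' := by
        rw [hval v']
        exact isMaxOn_iff.1 (hPmax v') (P v) (hPfeas v)
      rw [hval v]
      linarith
    have hBu : h v' - h v - Sd ≤ ∑ i ∈ S, (P v' i - P v i) * (u v' i - u v i) := by
      have e1 : Obj ν m S (u v') (P v')
          = Obj ν m S (u v) (P v') + ∑ i ∈ S, P v' i * (u v' i - u v i) := by
        have h9 := obj_shift (ν := ν) (m := m) (S := S) (u v) (u v') (P v')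
        linarith
      have e2 : Obj ν m S (u v) (P v') ≤ h v := by
        rw [hval v]
        exact isMaxOn_iff.1 (hPmax v) (P v') (hPfeas v')
      have e3 : ∑ i ∈ S, (P v' i - P v i) * (u v' i - u v i)
          = (∑ i ∈ S, P v' i * (u v' i - u v i)) - Sd := by
        rw [hSd, ← Finset.sum_sub_distrib]
        apply Finset.sum_congr rfl
        intro i _
        ring
      rw [hval v', e1, e3]
      linarith
    have hM : ∀ i ∈ S, |u v' i - u v i| ≤ (G + lam/2*(2*‖v‖+1)) * ‖v' - v‖ := by
      intro i _
      have h1 : |F i v' - F i v| ≤ G * ‖v' - v‖ := hFlip i v' v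
      have h2 : |‖v'‖^2 - ‖v‖^2| ≤ (‖v'‖ + ‖v‖) * ‖v' - v‖ := by
        rw [show ‖v'‖^2 - ‖v‖^2 = (‖v'‖ - ‖v‖) * (‖v'‖ + ‖v‖) by ring, abs_mul,
          abs_of_nonneg (by positivity : (0:ℝ) ≤ ‖v'‖ + ‖v‖)]
        calc |‖v'‖ - ‖v‖| * (‖v'‖ + ‖v‖) ≤ ‖v' - v‖ * (‖v'‖ + ‖v‖) :=
            mul_le_mul_of_nonneg_right (abs_norm_sub_norm_le v' v) (by positivity)
        _ = (‖v'‖ + ‖v‖) * ‖v' - v‖ := mul_comm _ _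
      have h3 : ‖v'‖ ≤ ‖v‖ + 1 := by
        have h7 := norm_sub_norm_le v' v
        linarith
      have h4 : u v' i - u v i = (F i v' - F i v) + lam/2 * (‖v'‖^2 - ‖v‖^2) := by
        simp only [hu]; ring
      rw [h4]
      calc |(F i v' - F i v) + lam/2 * (‖v'‖^2 - ‖v‖^2)|
          ≤ |F i v' - F i v| + |lam/2 * (‖v'‖^2 - ‖v‖^2)| := abs_add_le _ _
      _ ≤ G * ‖v' - v‖ + lam/2 * ((‖v'‖ + ‖v‖) * ‖v' - v‖) := by
          refine add_le_add h1 ?_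
          rw [abs_mul, abs_of_nonneg (by linarith : (0:ℝ) ≤ lam/2)]
          exact mul_le_mul_of_nonneg_left h2 (by linarith)
      _ ≤ (G + lam/2*(2*‖v‖+1)) * ‖v' - v‖ := by
          have h6 : (‖v'‖ + ‖v‖) * ‖v' - v‖ ≤ (2*‖v‖+1) * ‖v' - v‖ :=
            mul_le_mul_of_nonneg_right (by linarith) (norm_nonneg _)
          have h7 : lam/2 * ((‖v'‖ + ‖v‖) * ‖v' - v‖) ≤ lam/2 * ((2*‖v‖+1) * ‖v' - v‖) :=
            mul_le_mul_of_nonneg_left h6 (by linarith)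
          nlinarith [h7]
    have hcnn : (0:ℝ) ≤ G + lam/2*(2*‖v‖+1) := by
      have : (0:ℝ) ≤ lam/2*(2*‖v‖+1) := mul_nonneg (by linarith) (by positivity)
      linarith
    have hcross : ∑ i ∈ S, (P v' i - P v i) * (u v' i - u v i)
        ≤ (G + lam/2*(2*‖v‖+1))^2/ν * ‖v' - v‖^2 := by
      have hl1 := hPl1 v' v
      calc ∑ i ∈ S, (P v' i - P v i) * (u v' i - u v i)
          ≤ ∑ i ∈ S, |P v' i - P v i| * ((G + lam/2*(2*‖v‖+1)) * ‖v' - v‖) := by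
            apply Finset.sum_le_sum
            intro i hi
            calc (P v' i - P v i) * (u v' i - u v i)
                ≤ |(P v' i - P v i) * (u v' i - u v i)| := le_abs_self _
            _ = |P v' i - P v i| * |u v' i - u v i| := abs_mul _ _
            _ ≤ |P v' i - P v i| * ((G + lam/2*(2*‖v‖+1)) * ‖v' - v‖) :=
                mul_le_mul_of_nonneg_left (hM i hi) (abs_nonneg _)
      _ = (∑ i ∈ S, |P v' i - P v i|) * ((G + lam/2*(2*‖v‖+1)) * ‖v' - v‖) :=
          (Finset.sum_mul _ _ _).symm
      _ ≤ (G * ‖v' - v‖ / ν) * ((G + lam/2*(2*‖v‖+1)) * ‖v' - v‖) :=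
          mul_le_mul_of_nonneg_right hl1 (mul_nonneg hcnn (norm_nonneg _))
      _ ≤ (G + lam/2*(2*‖v‖+1))^2/ν * ‖v' - v‖^2 := by
          have e : (G * ‖v' - v‖ / ν) * ((G + lam/2*(2*‖v‖+1)) * ‖v' - v‖)
              = (G * (G + lam/2*(2*‖v‖+1))) * ν⁻¹ * ‖v' - v‖^2 := by ring
          have e2 : (G + lam/2*(2*‖v‖+1))^2/ν * ‖v' - v‖^2
              = ((G + lam/2*(2*‖v‖+1))^2) * ν⁻¹ * ‖v' - v‖^2 := by ring
          rw [e, e2]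
          apply mul_le_mul_of_nonneg_right _ (sq_nonneg _)
          apply mul_le_mul_of_nonneg_right _ (inv_nonneg.2 hν.le)
          nlinarith [hcnn, hG, mul_nonneg (show (0:ℝ) ≤ lam/2 by linarith)
            (show (0:ℝ) ≤ 2*‖v‖+1 by positivity)]
    have hB : |h v' - h v - Sd| ≤ (G + lam/2*(2*‖v‖+1))^2/ν * ‖v' - v‖^2 := by
      rw [abs_of_nonneg hBl]
      exact hBu.trans hcross
    calc |h v' - h v - inner ℝ (gr v) (v' - v)|
        = |(h v' - h v - Sd) + (Sd - inner ℝ (gr v) (v' - v))| := by ring_nf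
    _ ≤ |h v' - h v - Sd| + |Sd - inner ℝ (gr v) (v' - v)| := abs_add_le _ _
    _ ≤ (G + lam/2*(2*‖v‖+1))^2/ν * ‖v' - v‖^2 + (L + lam/2) * ‖v' - v‖^2 :=
        add_le_add hB hA
    _ = (L + lam/2 + (G + lam/2*(2*‖v‖+1))^2/ν) * ‖v' - v‖^2 := by ring
  have hgradval : ∀ v, gradient h v = gr v := fun v => (hgradh v).gradient
  have hdiffh : Differentiable ℝ h := fun v => ((hgradh v).hasFDerivAt).differentiableAt
  have hKnn : (0:ℝ) ≤ L + lam + G^2/ν := by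
    have : (0:ℝ) ≤ G^2/ν := div_nonneg (sq_nonneg _) hν.le
    linarith
  have hgrcont : Continuous gr := by
    have hlw : LipschitzWith ((L + lam + G^2/ν).toNNReal) gr := by
      apply LipschitzWith.of_dist_le_mul
      intro x y
      rw [dist_eq_norm, dist_eq_norm, Real.coe_toNNReal _ hKnn]
      exact hgrlip x y
    exact hlw.continuous
  have hcd : ContDiff ℝ 1 h := by
    rw [contDiff_one_iff_fderiv]
    refine ⟨hdiffh, ?_⟩
    apply Continuous.congr ((toDual ℝ (EuclideanSpace ℝ (Fin d))).continuous.comp hgrcont)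
    intro x
    exact ((hgradh x).hasFDerivAt.fderiv).symm
  refine ⟨?_, hcd, ?_, ?_⟩
  · intro v
    refine ⟨P v, ⟨(hPfeas v).1, (hPfeas v).2.1, (hPfeas v).2.2.1, (hPfeas v).2.2.2,
      (hval v).symm⟩, ?_⟩
    rintro π ⟨h1, h2, h3, h4, h5⟩
    exact hchar v π h1 h2 h3 h4 h5
  · intro v π h1 h2 h3 h4 h5
    have hπP : π = P v := hchar v π h1 h2 h3 h4 h5
    rw [hπP, hgradval v]
    simp only [hgr]
    apply Finset.sum_congr rfl
    intro i _
    rw [hfgradval i v]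
  · intro v v'
    rw [hgradval v, hgradval v']
    exact hgrlip v v'
end
end

section
/- Let F_1,…,F_n : ℝ^d → ℝ be continuously differentiable and G-Lipschitz, let θ ∈ (0,1], 1 ≤ m ≤ n, λ ≥ 0, ν > 0, and set F̃_i(w) = F_i(w) + (λ/2)‖w‖². For each subset S of size m let π^S(w) be the maximizer of π ↦ ∑_{i∈S} π_i F̃_i(w) − ν D_S(π) over P_{θ,S}, and let F̄_θ^ν(w) = E_{S∼U_m}[max_{π∈P_{θ,S}} ( ∑_{i∈S} π_i F̃_i(w) − ν D_S(π) )]. Then for every w ∈ ℝ^d, E_{S∼U_m}[ ∑_{i∈S} π^S_i(w) ‖∇F̃_i(w)‖² ] ≤ (4 + 8/(θm)) G² + ‖∇F̄_θ^ν(w)‖². -/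
open scoped BigOperators RealInnerProductSpace

noncomputable section

/-- `log (c+t) - log (c-t) ≥ 2t` for `0 ≤ t < c ≤ 1`. -/
lemma aux_log_gap {c : ℝ} (hc1 : c ≤ 1) {t : ℝ} (ht0 : 0 ≤ t) (htc : t < c) :
    2 * t ≤ Real.log (c + t) - Real.log (c - t) := by
  have hc0 : 0 < c := lt_of_le_of_lt ht0 htc
  set F : ℝ → ℝ := fun s => Real.log (c + s) - Real.log (c - s) - 2 * s with hF
  have hmono : MonotoneOn F (Set.Icc 0 t) := by
    have hderiv : ∀ s ∈ Set.Ioo (0:ℝ) t, HasDerivAt F ((c+s)⁻¹ * 1 - ((c-s)⁻¹ * (-1)) - 2) s := by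
      intro s hs
      have hs1 : (0:ℝ) < c + s := by nlinarith [hs.1]
      have hs2 : (0:ℝ) < c - s := by nlinarith [hs.2]
      have h1 : HasDerivAt (fun s : ℝ => Real.log (c + s)) ((c+s)⁻¹ * 1) s :=
        (Real.hasDerivAt_log hs1.ne').comp s ((hasDerivAt_id s).const_add c)
      have h2 : HasDerivAt (fun s : ℝ => Real.log (c - s)) ((c-s)⁻¹ * (-1)) s := by
        have := (Real.hasDerivAt_log hs2.ne').comp s ((hasDerivAt_id s).const_sub c)
        exact this.congr_deriv (by ring)
      have h3 : HasDerivAt (fun s : ℝ => 2 * s) 2 s := by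
        simpa using (hasDerivAt_id s).const_mul (2:ℝ)
      exact (h1.sub h2).sub h3
    apply monotoneOn_of_deriv_nonneg (convex_Icc 0 t)
    · -- continuity
      intro s hs
      have hs1 : (0:ℝ) < c + s := by nlinarith [hs.1, hs.2]
      have hs2 : (0:ℝ) < c - s := by nlinarith [hs.2]
      have h1 : ContinuousAt (fun s : ℝ => Real.log (c + s)) s :=
        (Real.continuousAt_log hs1.ne').comp (continuous_const.add continuous_id).continuousAt
      have h2 : ContinuousAt (fun s : ℝ => Real.log (c - s)) s :=
        (Real.continuousAt_log hs2.ne').comp (continuous_const.sub continuous_id).continuousAt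
      exact (ContinuousAt.sub (h1.sub h2) ((continuous_const.mul continuous_id).continuousAt)).continuousWithinAt
    · intro s hs
      rw [interior_Icc] at hs
      exact ((hderiv s hs).differentiableAt).differentiableWithinAt
    · intro s hs
      rw [interior_Icc] at hs
      rw [(hderiv s hs).deriv]
      have hs1 : (0:ℝ) < c + s := by nlinarith [hs.1]
      have hs2 : (0:ℝ) < c - s := by nlinarith [hs.2, htc]
      have key : c ≥ (c+s)*(c-s) := by nlinarith [hs.1, hs.2, htc]
      have h4 : (c+s)⁻¹ + (c-s)⁻¹ ≥ 2 := by
        rw [inv_add_inv hs1.ne' hs2.ne']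
        rw [ge_iff_le, le_div_iff₀ (by positivity)]
        nlinarith
      nlinarith
  have h0 : F 0 = 0 := by simp [hF]
  have := hmono (Set.left_mem_Icc.mpr ht0) (Set.right_mem_Icc.mpr ht0) ht0
  rw [h0] at this
  simp only [hF] at this
  linarith

/-- midpoint strong convexity of `x * log x` on `[0,1]`. -/
lemma aux_midpoint_mul_log {a b : ℝ} (ha0 : 0 ≤ a) (ha1 : a ≤ 1) (hb0 : 0 ≤ b) (hb1 : b ≤ 1) :
    (a - b) ^ 2 / 4 ≤
      a * Real.log a + b * Real.log b - 2 * (((a + b) / 2) * Real.log ((a + b) / 2)) := by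
  wlog hba : b ≤ a with H
  · have h2 := H hb0 hb1 ha0 ha1 (le_of_not_ge hba)
    rw [show (a - b) ^ 2 = (b - a) ^ 2 by ring, show a + b = b + a by ring]
    linarith
  set c : ℝ := (a + b) / 2 with hcdef
  set d : ℝ := (a - b) / 2 with hddef
  have hd0 : 0 ≤ d := by simp [hddef]; linarith
  have hdc : d ≤ c := by simp [hcdef, hddef]; linarith
  have hc1 : c ≤ 1 := by simp [hcdef]; linarith
  have ha : a = c + d := by simp [hcdef, hddef]; ring
  have hb : b = c - d := by simp [hcdef, hddef]; ring
  rcases eq_or_lt_of_le hd0 with hd | hd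
  · -- d = 0 : a = b = c
    rw [ha, hb, ← hd]
    simp
    nlinarith
  have hc0 : 0 < c := lt_of_lt_of_le hd hdc
  set φ : ℝ → ℝ := fun x => x * Real.log x with hφ
  set g : ℝ → ℝ := fun t => φ (c + t) + φ (c - t) - 2 * φ c - t ^ 2 with hg
  have hmono : MonotoneOn g (Set.Icc 0 d) := by
    have hderiv : ∀ s ∈ Set.Ioo (0:ℝ) d, HasDerivAt g
        ((Real.log (c + s) + 1) * 1 + (Real.log (c - s) + 1) * (-1) - 2 * s ^ 1) s := by
      intro s hs
      have hs1 : (0:ℝ) < c + s := by nlinarith [hs.1]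
      have hs2 : (0:ℝ) < c - s := by nlinarith [hs.2, hdc]
      have h1 : HasDerivAt (fun s : ℝ => φ (c + s)) ((Real.log (c + s) + 1) * 1) s :=
        (Real.hasDerivAt_mul_log hs1.ne').comp s ((hasDerivAt_id s).const_add c)
      have h2 : HasDerivAt (fun s : ℝ => φ (c - s)) ((Real.log (c - s) + 1) * (-1)) s := by
        have := (Real.hasDerivAt_mul_log hs2.ne').comp s ((hasDerivAt_id s).const_sub c)
        exact this.congr_deriv (by ring)
      exact (((h1.add h2).sub_const (2 * φ c)).sub (hasDerivAt_pow 2 s)).congr_deriv (by norm_num)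
    apply monotoneOn_of_deriv_nonneg (convex_Icc 0 d)
    · intro s hs
      have h1 : ContinuousAt (fun s : ℝ => φ (c + s)) s :=
        Real.continuous_mul_log.continuousAt.comp (continuous_const.add continuous_id).continuousAt
      have h2 : ContinuousAt (fun s : ℝ => φ (c - s)) s :=
        Real.continuous_mul_log.continuousAt.comp (continuous_const.sub continuous_id).continuousAt
      exact (ContinuousAt.sub (ContinuousAt.sub (h1.add h2) continuousAt_const)
        (continuous_pow 2).continuousAt).continuousWithinAt
    · intro s hs
      rw [interior_Icc] at hs
      exact ((hderiv s hs).differentiableAt).differentiableWithinAt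
    · intro s hs
      rw [interior_Icc] at hs
      rw [(hderiv s hs).deriv]
      have := aux_log_gap hc1 (le_of_lt hs.1) (lt_of_lt_of_le hs.2 hdc)
      simp only [pow_one]
      nlinarith
  have h0 : g 0 = 0 := by simp [hg, hφ]; ring
  have hkey := hmono (Set.left_mem_Icc.mpr hd0) (Set.right_mem_Icc.mpr hd0) hd0
  rw [h0] at hkey
  have : 0 ≤ φ (c + d) + φ (c - d) - 2 * φ c - d ^ 2 := hkey
  rw [ha, hb]
  have hd2 : (a - b) ^ 2 / 4 = d ^ 2 := by rw [hddef]; ring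
  rw [ha, hb] at hd2
  rw [hd2]
  simp only [hφ] at this
  linarith

def gdFeas (n m : ℕ) (θ : ℝ) (S : Finset (Fin n)) : Set (Fin n → ℝ) :=
  {π | (∀ i, 0 ≤ π i) ∧ (∀ i ∉ S, π i = 0) ∧ (∑ i ∈ S, π i = 1) ∧ ∀ i, π i ≤ 1 / (θ * m)}

def gdObj (ν : ℝ) (m : ℕ) {n : ℕ} (S : Finset (Fin n)) (c : Fin n → ℝ) (π : Fin n → ℝ) : ℝ :=
  (∑ i ∈ S, π i * c i) - ν * ∑ i ∈ S, π i * Real.log (π i * m)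

variable {n m : ℕ} {θ ν : ℝ} {S : Finset (Fin n)}

lemma gdFeas_nonempty (hm : 0 < m) (hθ : θ ∈ Set.Ioc (0:ℝ) 1) (hS : S.card = m) :
    (gdFeas n m θ S).Nonempty := by
  have hmpos : (0:ℝ) < m := by exact_mod_cast hm
  refine ⟨fun i => if i ∈ S then (m:ℝ)⁻¹ else 0, fun i => ?_, fun i hi => ?_, ?_, fun i => ?_⟩
  all_goals dsimp only
  · by_cases hi : i ∈ S
    · rw [if_pos hi]; positivity
    · rw [if_neg hi]
  · rw [if_neg hi]
  · rw [Finset.sum_congr rfl (fun i hi => if_pos hi), Finset.sum_const, hS, nsmul_eq_mul]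
    field_simp
  · have h1 : (m:ℝ)⁻¹ ≤ 1 / (θ * m) := by
      rw [inv_eq_one_div]
      apply div_le_div_of_nonneg_left one_pos.le (mul_pos hθ.1 hmpos) (by nlinarith [hθ.1, hθ.2])
    by_cases hi : i ∈ S
    · rw [if_pos hi]; exact h1
    · rw [if_neg hi]
      exact le_of_lt (one_div_pos.mpr (mul_pos hθ.1 hmpos))

lemma gdFeas_le_one {π : Fin n → ℝ} (hπ : π ∈ gdFeas n m θ S) (i : Fin n) : π i ≤ 1 := by
  obtain ⟨h0, hsupp, hsum, hcap⟩ := hπ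
  by_cases hi : i ∈ S
  · calc π i ≤ ∑ j ∈ S, π j := Finset.single_le_sum (fun j _ => h0 j) hi
    _ = 1 := hsum
  · rw [hsupp i hi]; exact one_pos.le

lemma gdFeas_compact : IsCompact (gdFeas n m θ S) := by
  have hsub : gdFeas n m θ S ⊆ Set.pi Set.univ (fun _ : Fin n => Set.Icc (0:ℝ) (1 / (θ * m))) :=
    fun π hπ i _ => ⟨hπ.1 i, hπ.2.2.2 i⟩
  have hK : IsCompact (Set.pi Set.univ (fun _ : Fin n => Set.Icc (0:ℝ) (1 / (θ * m)))) :=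
    isCompact_univ_pi (fun _ => isCompact_Icc)
  refine IsCompact.of_isClosed_subset hK ?_ hsub
  have h1 : IsClosed {π : Fin n → ℝ | ∀ i, 0 ≤ π i} := by
    have : {π : Fin n → ℝ | ∀ i, 0 ≤ π i} = ⋂ i, {π : Fin n → ℝ | 0 ≤ π i} := by
      ext π; simp
    rw [this]; exact isClosed_iInter fun i => isClosed_le continuous_const (continuous_apply i)
  have h2 : IsClosed {π : Fin n → ℝ | ∀ i ∉ S, π i = 0} := by
    have : {π : Fin n → ℝ | ∀ i ∉ S, π i = 0}
        = ⋂ i ∈ {j : Fin n | j ∉ S}, {π : Fin n → ℝ | π i = 0} := by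
      ext π; simp
    rw [this]
    exact isClosed_biInter fun i _ => isClosed_eq (continuous_apply i) continuous_const
  have h3 : IsClosed {π : Fin n → ℝ | ∑ i ∈ S, π i = 1} :=
    isClosed_eq (continuous_finset_sum _ fun i _ => continuous_apply i) continuous_const
  have h4 : IsClosed {π : Fin n → ℝ | ∀ i, π i ≤ 1 / (θ * m)} := by
    have : {π : Fin n → ℝ | ∀ i, π i ≤ 1 / (θ * m)}
        = ⋂ i, {π : Fin n → ℝ | π i ≤ 1 / (θ * m)} := by ext π; simp
    rw [this]; exact isClosed_iInter fun i => isClosed_le (continuous_apply i) continuous_const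
  have : gdFeas n m θ S = {π : Fin n → ℝ | ∀ i, 0 ≤ π i} ∩ ({π | ∀ i ∉ S, π i = 0}
      ∩ ({π | ∑ i ∈ S, π i = 1} ∩ {π | ∀ i, π i ≤ 1 / (θ * m)})) := by
    ext π; simp [gdFeas, Set.mem_setOf_eq, Set.mem_inter_iff]
  rw [this]
  exact h1.inter (h2.inter (h3.inter h4))

lemma gdObj_continuousOn (hm : 0 < m) :
    ContinuousOn (gdObj ν m S c) {π : Fin n → ℝ | ∀ i, 0 ≤ π i} := by
  have hmpos : (0:ℝ) < m := by exact_mod_cast hm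
  have hlog : ∀ (x : ℝ), 0 ≤ x → x * Real.log (x * m) = x * Real.log x + x * Real.log m := by
    intro x hx
    rcases eq_or_lt_of_le hx with h | h
    · simp [← h]
    · rw [Real.log_mul h.ne' hmpos.ne']; ring
  have hcont : ContinuousOn (fun π : Fin n → ℝ => ∑ i ∈ S, (π i * Real.log (π i) + π i * Real.log m))
      {π : Fin n → ℝ | ∀ i, 0 ≤ π i} :=
    (continuous_finset_sum _ fun i _ =>
      (Real.continuous_mul_log.comp (continuous_apply i)).add
        ((continuous_apply i).mul continuous_const)).continuousOn
  have : ContinuousOn (fun π : Fin n → ℝ => ∑ i ∈ S, π i * Real.log (π i * m))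
      {π : Fin n → ℝ | ∀ i, 0 ≤ π i} := by
    apply hcont.congr
    intro π hπ
    exact Finset.sum_congr rfl fun i _ => hlog (π i) (hπ i)
  exact ((continuous_finset_sum _ fun i _ =>
    (continuous_apply i).mul continuous_const).continuousOn).sub (continuousOn_const.mul this)

section
variable {n m : ℕ} {θ ν : ℝ} {S : Finset (Fin n)} {c : Fin n → ℝ}

lemma gdExists (hm : 0 < m) (hθ : θ ∈ Set.Ioc (0:ℝ) 1) (hS : S.card = m) (c : Fin n → ℝ) :
    ∃ p ∈ gdFeas n m θ S, IsMaxOn (gdObj ν m S c) (gdFeas n m θ S) p :=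
  gdFeas_compact.exists_isMaxOn (gdFeas_nonempty hm hθ hS)
    ((gdObj_continuousOn hm).mono (fun π hπ => hπ.1))

/-- entropy rewriting on the feasible set -/
lemma gdD_eq (hm : 0 < m) {π : Fin n → ℝ} (hπ : π ∈ gdFeas n m θ S) :
    ∑ i ∈ S, π i * Real.log (π i * m)
      = (∑ i ∈ S, π i * Real.log (π i)) + Real.log m := by
  have hmpos : (0:ℝ) < m := by exact_mod_cast hm
  have : ∀ i ∈ S, π i * Real.log (π i * m) = π i * Real.log (π i) + π i * Real.log m := by
    intro i _
    rcases eq_or_lt_of_le (hπ.1 i) with h | h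
    · simp [← h]
    · rw [Real.log_mul h.ne' hmpos.ne']; ring
  rw [Finset.sum_congr rfl this, Finset.sum_add_distrib, ← Finset.sum_mul, hπ.2.2.1, one_mul]

/-- quadratic optimality gap from strong concavity of entropy -/
lemma gdGap (hm : 0 < m) (hν : 0 < ν) {p q : Fin n → ℝ}
    (hp : p ∈ gdFeas n m θ S) (hq : q ∈ gdFeas n m θ S)
    (hmax : IsMaxOn (gdObj ν m S c) (gdFeas n m θ S) p) :
    ∑ i ∈ S, (p i - q i) ^ 2 ≤ 4 / ν * (gdObj ν m S c p - gdObj ν m S c q) := by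
  set mid : Fin n → ℝ := fun i => (p i + q i) / 2 with hmid_def
  have hmid : mid ∈ gdFeas n m θ S := by
    refine ⟨fun i => ?_, fun i hi => ?_, ?_, fun i => ?_⟩
    · show (0:ℝ) ≤ (p i + q i) / 2
      have := hp.1 i; have := hq.1 i; linarith
    · show (p i + q i) / 2 = 0
      rw [hp.2.1 i hi, hq.2.1 i hi]; ring
    · show ∑ i ∈ S, (p i + q i) / 2 = 1
      rw [← Finset.sum_div, Finset.sum_add_distrib, hp.2.2.1, hq.2.2.1]; norm_num
    · show (p i + q i) / 2 ≤ 1 / (θ * ↑m)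
      have := hp.2.2.2 i; have := hq.2.2.2 i; linarith
  set Q : ℝ := ∑ i ∈ S, (p i - q i) ^ 2 with hQ
  set Ep : ℝ := ∑ i ∈ S, p i * Real.log (p i) with hEp
  set Eq' : ℝ := ∑ i ∈ S, q i * Real.log (q i) with hEq
  set Em : ℝ := ∑ i ∈ S, mid i * Real.log (mid i) with hEm
  have hEm' : Em = ∑ i ∈ S, ((p i + q i) / 2) * Real.log ((p i + q i) / 2) := by
    simp [hEm, hmid_def]
  have hkey : Q / 4 ≤ Ep + Eq' - 2 * Em := by
    have hterm : ∀ i ∈ S, (p i - q i) ^ 2 / 4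
        ≤ p i * Real.log (p i) + q i * Real.log (q i)
          - 2 * (((p i + q i) / 2) * Real.log ((p i + q i) / 2)) := by
      intro i _
      exact aux_midpoint_mul_log (hp.1 i) (gdFeas_le_one hp i) (hq.1 i) (gdFeas_le_one hq i)
    have h2 := Finset.sum_le_sum hterm
    rw [← Finset.sum_div] at h2
    calc Q / 4 ≤ ∑ i ∈ S, (p i * Real.log (p i) + q i * Real.log (q i)
          - 2 * (((p i + q i) / 2) * Real.log ((p i + q i) / 2))) := h2
      _ = Ep + Eq' - 2 * Em := by
          rw [hEp, hEq, hEm']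
          simp only [Finset.sum_sub_distrib, Finset.sum_add_distrib, Finset.mul_sum]
  have hpay : ∑ i ∈ S, mid i * c i = ((∑ i ∈ S, p i * c i) + ∑ i ∈ S, q i * c i) / 2 := by
    show ∑ i ∈ S, ((p i + q i) / 2) * c i = _
    rw [Finset.sum_congr rfl (g := fun i => (p i * c i + q i * c i) / 2)
      (fun i _ => by ring), ← Finset.sum_div, Finset.sum_add_distrib]
  have hDp := gdD_eq hm hp
  have hDq := gdD_eq hm hq
  have hDm := gdD_eq hm hmid
  have hle : gdObj ν m S c mid ≤ gdObj ν m S c p := hmax hmid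
  simp only [gdObj] at hle ⊢
  rw [hDp, hDm, hpay, ← hEp, ← hEm] at hle
  rw [hDp, hDq, ← hEp, ← hEq]
  rw [div_mul_eq_mul_div, le_div_iff₀ hν]
  nlinarith [mul_le_mul_of_nonneg_left hkey (le_of_lt hν), hle]
end

lemma gdObjDiff {n m : ℕ} {ν : ℝ} {S : Finset (Fin n)} (c c' π : Fin n → ℝ) :
    gdObj ν m S c π - gdObj ν m S c' π = ∑ i ∈ S, π i * (c i - c' i) := by
  simp only [gdObj]
  have : ∑ i ∈ S, π i * (c i - c' i) = (∑ i ∈ S, π i * c i) - ∑ i ∈ S, π i * c' i := by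
    rw [← Finset.sum_sub_distrib]; exact Finset.sum_congr rfl (fun i _ => by ring)
  rw [this]; ring

lemma gdObjDiff_le {n m : ℕ} {θ ν : ℝ} {S : Finset (Fin n)} {c c' : Fin n → ℝ} {π : Fin n → ℝ}
    (hπ : π ∈ gdFeas n m θ S) {K : ℝ} (hK : ∀ i ∈ S, |c i - c' i| ≤ K) :
    |gdObj ν m S c π - gdObj ν m S c' π| ≤ K := by
  rw [gdObjDiff]
  calc |∑ i ∈ S, π i * (c i - c' i)| ≤ ∑ i ∈ S, |π i * (c i - c' i)| :=
        Finset.abs_sum_le_sum_abs _ _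
    _ ≤ ∑ i ∈ S, π i * K := by
        apply Finset.sum_le_sum
        intro i hi
        rw [abs_mul, abs_of_nonneg (hπ.1 i)]
        exact mul_le_mul_of_nonneg_left (hK i hi) (hπ.1 i)
    _ = K := by rw [← Finset.sum_mul, hπ.2.2.1, one_mul]

set_option maxHeartbeats 2000000 in
lemma gdHasGradient {d n m : ℕ} (hm : 0 < m) {θ lam ν G : ℝ} (hθ : θ ∈ Set.Ioc (0:ℝ) 1)
    (hlam : 0 ≤ lam) (hν : 0 < ν) (hG : 0 ≤ G)
    {F : Fin n → EuclideanSpace ℝ (Fin d) → ℝ}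
    (hFc1 : ∀ i, ContDiff ℝ 1 (F i)) (hFlip : ∀ i v v', |F i v - F i v'| ≤ G * ‖v - v'‖)
    {w : EuclideanSpace ℝ (Fin d)} {S : Finset (Fin n)} (hS : S.card = m)
    {sel : Fin n → ℝ} (hsel : sel ∈ gdFeas n m θ S)
    (hmax : IsMaxOn (gdObj ν m S (fun i => F i w + lam / 2 * ‖w‖ ^ 2)) (gdFeas n m θ S) sel) :
    HasGradientAt
      (fun v => sSup ((gdObj ν m S (fun i => F i v + lam / 2 * ‖v‖ ^ 2)) '' gdFeas n m θ S))
      (∑ i ∈ S, sel i • gradient (fun z => F i z + lam / 2 * ‖z‖ ^ 2) w) w := by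
  classical
  set Ft : Fin n → EuclideanSpace ℝ (Fin d) → ℝ := fun i v => F i v + lam / 2 * ‖v‖ ^ 2 with hFt
  set cv : EuclideanSpace ℝ (Fin d) → Fin n → ℝ := fun v i => Ft i v with hcv
  set h : EuclideanSpace ℝ (Fin d) → ℝ := fun v => sSup ((gdObj ν m S (cv v)) '' gdFeas n m θ S) with hh
  -- differentiability of Ft i
  have hdiffN : DifferentiableAt ℝ (fun z : EuclideanSpace ℝ (Fin d) => ‖z‖ ^ 2) w :=
    ((contDiff_norm_sq ℝ (E := EuclideanSpace ℝ (Fin d)) (n := 1)).differentiable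
      one_ne_zero).differentiableAt
  have hdiffF : ∀ i, DifferentiableAt ℝ (F i) w :=
    fun i => ((hFc1 i).differentiable one_ne_zero).differentiableAt
  have hdiffFt : ∀ i, DifferentiableAt ℝ (Ft i) w :=
    fun i => (hdiffF i).add (hdiffN.const_mul (lam / 2))
  -- local Lipschitz bound
  set L : ℝ := G + lam / 2 * (2 * ‖w‖ + 1) with hL
  have hL0 : 0 ≤ L := by positivity
  have hFtLip : ∀ v : EuclideanSpace ℝ (Fin d), ‖v - w‖ ≤ 1 → ∀ i, |Ft i v - Ft i w| ≤ L * ‖v - w‖ := by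
    intro v hv i
    have h1 : |F i v - F i w| ≤ G * ‖v - w‖ := hFlip i v w
    have h2 : |‖v‖ - ‖w‖| ≤ ‖v - w‖ := abs_norm_sub_norm_le v w
    have h3 : ‖v‖ ≤ ‖w‖ + 1 := by
      have := norm_sub_norm_le v w
      linarith
    have h4 : |lam / 2 * ‖v‖ ^ 2 - lam / 2 * ‖w‖ ^ 2| ≤ lam / 2 * (2 * ‖w‖ + 1) * ‖v - w‖ := by
      have : lam / 2 * ‖v‖ ^ 2 - lam / 2 * ‖w‖ ^ 2 = lam / 2 * ((‖v‖ - ‖w‖) * (‖v‖ + ‖w‖)) := by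
        ring
      rw [this, abs_mul, abs_mul, abs_of_nonneg (by positivity : (0:ℝ) ≤ lam / 2)]
      have h5 : |‖v‖ + ‖w‖| ≤ 2 * ‖w‖ + 1 := by
        rw [abs_of_nonneg (by positivity)]
        linarith
      calc lam / 2 * (|‖v‖ - ‖w‖| * |‖v‖ + ‖w‖|)
          ≤ lam / 2 * (‖v - w‖ * (2 * ‖w‖ + 1)) := by
            apply mul_le_mul_of_nonneg_left _ (by positivity)
            exact mul_le_mul h2 h5 (abs_nonneg _) (norm_nonneg _)
        _ = lam / 2 * (2 * ‖w‖ + 1) * ‖v - w‖ := by ring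
    calc |Ft i v - Ft i w| = |(F i v - F i w) + (lam / 2 * ‖v‖ ^ 2 - lam / 2 * ‖w‖ ^ 2)| := by
          simp only [hFt]; ring_nf
      _ ≤ |F i v - F i w| + |lam / 2 * ‖v‖ ^ 2 - lam / 2 * ‖w‖ ^ 2| := abs_add_le _ _
      _ ≤ G * ‖v - w‖ + lam / 2 * (2 * ‖w‖ + 1) * ‖v - w‖ := add_le_add h1 h4
      _ = L * ‖v - w‖ := by rw [hL]; ring
  -- the sandwich estimate
  set C : ℝ := m * Real.sqrt (8 * L / ν) * L with hC
  have hC0 : 0 ≤ C := by positivity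
  have hsandwich : ∀ v : EuclideanSpace ℝ (Fin d), ‖v - w‖ ≤ 1 →
      0 ≤ h v - h w - ∑ i ∈ S, sel i * (Ft i v - Ft i w) ∧
      h v - h w - ∑ i ∈ S, sel i * (Ft i v - Ft i w)
        ≤ C * Real.sqrt ‖v - w‖ * ‖v - w‖ := by
    intro v hv1
    obtain ⟨pv, hpv, hpvmax⟩ := gdExists (ν := ν) hm hθ hS (cv v)
    have hub_v : ∀ x ∈ (gdObj ν m S (cv v)) '' gdFeas n m θ S, x ≤ gdObj ν m S (cv v) pv := by
      rintro x ⟨q, hq, rfl⟩; exact hpvmax hq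
    have hub_w : ∀ x ∈ (gdObj ν m S (cv w)) '' gdFeas n m θ S, x ≤ gdObj ν m S (cv w) sel := by
      rintro x ⟨q, hq, rfl⟩; exact hmax hq
    have hvalv : h v = gdObj ν m S (cv v) pv :=
      IsGreatest.csSup_eq ⟨Set.mem_image_of_mem _ hpv, hub_v⟩
    have hvalw : h w = gdObj ν m S (cv w) sel :=
      IsGreatest.csSup_eq ⟨Set.mem_image_of_mem _ hsel, hub_w⟩
    have hlow : gdObj ν m S (cv v) sel ≤ h v := by
      rw [hvalv]; exact hpvmax hsel
    have hup : gdObj ν m S (cv w) pv ≤ h w := by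
      rw [hvalw]; exact hmax hpv
    have hΔ : ∀ i ∈ S, |cv v i - cv w i| ≤ L * ‖v - w‖ := fun i _ => hFtLip v hv1 i
    have hAeq : ∀ π : Fin n → ℝ, gdObj ν m S (cv v) π - gdObj ν m S (cv w) π
        = ∑ i ∈ S, π i * (Ft i v - Ft i w) := fun π => gdObjDiff (cv v) (cv w) π
    constructor
    · have := hAeq sel
      rw [hvalw]
      linarith [hlow, this.symm.le, this.le]
    · -- upper estimate
      have hupper : h v - h w ≤ ∑ i ∈ S, pv i * (Ft i v - Ft i w) := by
        rw [hvalv]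
        linarith [hup, (hAeq pv).le, (hAeq pv).ge]
      -- gap bound
      have hgap : gdObj ν m S (cv w) sel - gdObj ν m S (cv w) pv ≤ 2 * (L * ‖v - w‖) := by
        have t1 : |gdObj ν m S (cv w) sel - gdObj ν m S (cv v) sel| ≤ L * ‖v - w‖ := by
          have := gdObjDiff_le (θ := θ) (ν := ν) hsel (K := L * ‖v - w‖)
            (fun i hi => by rw [abs_sub_comm]; exact hΔ i hi)
          exact this
        have t2 : gdObj ν m S (cv v) sel ≤ gdObj ν m S (cv v) pv := hpvmax hsel
        have t3 : |gdObj ν m S (cv v) pv - gdObj ν m S (cv w) pv| ≤ L * ‖v - w‖ :=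
          gdObjDiff_le (θ := θ) (ν := ν) hpv hΔ
        have a1 := abs_le.mp t1
        have a3 := abs_le.mp t3
        linarith [a1.2, a3.2]
      have hQ : ∑ i ∈ S, (sel i - pv i) ^ 2 ≤ 8 * L / ν * ‖v - w‖ := by
        have := gdGap hm hν hsel hpv hmax
        have h2 : 4 / ν * (gdObj ν m S (cv w) sel - gdObj ν m S (cv w) pv)
            ≤ 4 / ν * (2 * (L * ‖v - w‖)) :=
          mul_le_mul_of_nonneg_left hgap (by positivity)
        calc ∑ i ∈ S, (sel i - pv i) ^ 2
            ≤ 4 / ν * (gdObj ν m S (cv w) sel - gdObj ν m S (cv w) pv) := this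
          _ ≤ 4 / ν * (2 * (L * ‖v - w‖)) := h2
          _ = 8 * L / ν * ‖v - w‖ := by ring
      -- pointwise bound |pv i - sel i| ≤ sqrt Q
      have hptw : ∀ i ∈ S, |pv i - sel i| ≤ Real.sqrt (8 * L / ν) * Real.sqrt ‖v - w‖ := by
        intro i hi
        have h1 : (sel i - pv i) ^ 2 ≤ ∑ j ∈ S, (sel j - pv j) ^ 2 :=
          Finset.single_le_sum (f := fun j => (sel j - pv j) ^ 2) (fun j _ => sq_nonneg _) hi
        have h2 : (pv i - sel i) ^ 2 ≤ 8 * L / ν * ‖v - w‖ := by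
          rw [show (pv i - sel i) ^ 2 = (sel i - pv i) ^ 2 by ring]
          linarith [hQ]
        have := Real.sqrt_le_sqrt h2
        rw [Real.sqrt_sq_eq_abs] at this
        calc |pv i - sel i| ≤ Real.sqrt (8 * L / ν * ‖v - w‖) := by
              rw [show (8:ℝ) * L / ν * ‖v - w‖ = (8 * L / ν) * ‖v - w‖ by ring] at this ⊢
              exact this
          _ = Real.sqrt (8 * L / ν) * Real.sqrt ‖v - w‖ :=
              Real.sqrt_mul (by positivity) _
      -- assemble
      have hdiff_sum : h v - h w - ∑ i ∈ S, sel i * (Ft i v - Ft i w)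
          ≤ ∑ i ∈ S, (pv i - sel i) * (Ft i v - Ft i w) := by
        have : ∑ i ∈ S, pv i * (Ft i v - Ft i w) - ∑ i ∈ S, sel i * (Ft i v - Ft i w)
            = ∑ i ∈ S, (pv i - sel i) * (Ft i v - Ft i w) := by
          rw [← Finset.sum_sub_distrib]
          exact Finset.sum_congr rfl (fun i _ => by ring)
        linarith [hupper]
      calc h v - h w - ∑ i ∈ S, sel i * (Ft i v - Ft i w)
          ≤ ∑ i ∈ S, (pv i - sel i) * (Ft i v - Ft i w) := hdiff_sum
        _ ≤ ∑ i ∈ S, |(pv i - sel i) * (Ft i v - Ft i w)| :=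
            Finset.sum_le_sum (fun i _ => le_abs_self _)
        _ ≤ ∑ i ∈ S, (Real.sqrt (8 * L / ν) * Real.sqrt ‖v - w‖) * (L * ‖v - w‖) := by
            apply Finset.sum_le_sum
            intro i hi
            rw [abs_mul]
            exact mul_le_mul (hptw i hi) (hFtLip v hv1 i) (abs_nonneg _) (by positivity)
        _ = C * Real.sqrt ‖v - w‖ * ‖v - w‖ := by
            rw [Finset.sum_const, hS, nsmul_eq_mul, hC]
            ring
  -- derivative of the linear comparison function
  set D : EuclideanSpace ℝ (Fin d) →L[ℝ] ℝ := ∑ i ∈ S, sel i • (fderiv ℝ (Ft i) w) with hD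
  have hB : HasFDerivAt (fun v => ∑ i ∈ S, sel i * Ft i v) D w := by
    apply HasFDerivAt.fun_sum
    intro i _
    exact ((hdiffFt i).hasFDerivAt).const_mul (sel i)
  -- conclude
  have hmain : HasFDerivAt h D w := by
    refine hasFDerivAt_iff_isLittleO.mpr ?_
    have heq : (fun v => h v - h w - D (v - w))
        = (fun v => (h v - h w - ∑ i ∈ S, sel i * (Ft i v - Ft i w)))
          + (fun v => (∑ i ∈ S, sel i * Ft i v) - (∑ i ∈ S, sel i * Ft i w) - D (v - w)) := by
      funext v
      simp only [Pi.add_apply]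
      have : ∑ i ∈ S, sel i * (Ft i v - Ft i w)
          = (∑ i ∈ S, sel i * Ft i v) - ∑ i ∈ S, sel i * Ft i w := by
        rw [← Finset.sum_sub_distrib]
        exact Finset.sum_congr rfl (fun i _ => by ring)
      rw [this]; ring
    rw [heq]
    apply Asymptotics.IsLittleO.add
    · -- the 3/2-power error term
      rw [Asymptotics.isLittleO_iff]
      intro ε hε
      have hδpos : (0:ℝ) < min 1 ((ε / (C + 1)) ^ 2) := by positivity
      filter_upwards [Metric.ball_mem_nhds w hδpos] with v hv
      rw [Metric.mem_ball, dist_eq_norm] at hv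
      have hv1 : ‖v - w‖ ≤ 1 := le_of_lt (lt_of_lt_of_le hv (min_le_left _ _))
      obtain ⟨he0, heC⟩ := hsandwich v hv1
      have hsq : Real.sqrt ‖v - w‖ ≤ ε / (C + 1) := by
        have h1 : ‖v - w‖ ≤ (ε / (C + 1)) ^ 2 := le_of_lt (lt_of_lt_of_le hv (min_le_right _ _))
        have := Real.sqrt_le_sqrt h1
        rwa [Real.sqrt_sq (by positivity)] at this
      have hnorm : ‖h v - h w - ∑ i ∈ S, sel i * (Ft i v - Ft i w)‖ ≤ ε * ‖v - w‖ := by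
        rw [Real.norm_eq_abs, abs_of_nonneg he0]
        calc h v - h w - ∑ i ∈ S, sel i * (Ft i v - Ft i w)
            ≤ C * Real.sqrt ‖v - w‖ * ‖v - w‖ := heC
          _ ≤ C * (ε / (C + 1)) * ‖v - w‖ := by
              apply mul_le_mul_of_nonneg_right _ (norm_nonneg _)
              exact mul_le_mul_of_nonneg_left hsq hC0
          _ ≤ ε * ‖v - w‖ := by
              apply mul_le_mul_of_nonneg_right _ (norm_nonneg _)
              rw [div_eq_mul_inv]
              have : C * (ε * (C + 1)⁻¹) = ε * (C / (C + 1)) := by ring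
              rw [this]
              have : C / (C + 1) ≤ 1 := by
                rw [div_le_one (by linarith)]
                linarith
              nlinarith [hε.le]
      simpa using hnorm
    · have := hasFDerivAt_iff_isLittleO.mp hB
      simpa using this
  -- translate to gradient form
  have hgrad := hmain.hasGradientAt
  have hDeq : (InnerProductSpace.toDual ℝ (EuclideanSpace ℝ (Fin d))).symm D
      = ∑ i ∈ S, sel i • gradient (fun z => F i z + lam / 2 * ‖z‖ ^ 2) w := by
    rw [hD, map_sum]
    apply Finset.sum_congr rfl
    intro i _
    rw [map_smul]
    rfl
  rw [hDeq] at hgrad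
  exact hgrad

lemma gdQuadGrad {d : ℕ} (lam : ℝ) (w : EuclideanSpace ℝ (Fin d)) :
    HasGradientAt (fun z : EuclideanSpace ℝ (Fin d) => lam / 2 * ‖z‖ ^ 2) (lam • w) w := by
  have h1 : HasFDerivAt (fun z : EuclideanSpace ℝ (Fin d) => (inner ℝ z z : ℝ))
      ((fderivInnerCLM ℝ (w, w)).comp
        ((ContinuousLinearMap.id ℝ (EuclideanSpace ℝ (Fin d))).prod
          (ContinuousLinearMap.id ℝ (EuclideanSpace ℝ (Fin d))))) w :=
    (hasFDerivAt_id w).inner ℝ (hasFDerivAt_id w)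
  have h2 := h1.const_mul (lam / 2)
  have hcong : (fun z : EuclideanSpace ℝ (Fin d) => lam / 2 * (inner ℝ z z : ℝ))
      = fun z : EuclideanSpace ℝ (Fin d) => lam / 2 * ‖z‖ ^ 2 :=
    funext fun z => by rw [real_inner_self_eq_norm_sq]
  rw [hcong] at h2
  rw [hasGradientAt_iff_hasFDerivAt]
  refine h2.congr_fderiv ?_
  symm
  apply ContinuousLinearMap.ext
  intro y
  simp only [InnerProductSpace.toDual_apply_apply, ContinuousLinearMap.smul_apply,
    ContinuousLinearMap.comp_apply, ContinuousLinearMap.prod_apply,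
    ContinuousLinearMap.coe_id', id_eq, fderivInnerCLM_apply, real_inner_smul_left,
    smul_eq_mul]
  rw [real_inner_comm y w]
  ring

lemma gdGradDecomp {d n : ℕ} {lam G : ℝ} (hG : 0 ≤ G)
    {F : Fin n → EuclideanSpace ℝ (Fin d) → ℝ}
    (hFc1 : ∀ i, ContDiff ℝ 1 (F i)) (hFlip : ∀ i v v', |F i v - F i v'| ≤ G * ‖v - v'‖)
    (w : EuclideanSpace ℝ (Fin d)) (i : Fin n) :
    gradient (fun z => F i z + lam / 2 * ‖z‖ ^ 2) w = gradient (F i) w + lam • w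
      ∧ ‖gradient (F i) w‖ ≤ G := by
  have hdiffF : DifferentiableAt ℝ (F i) w :=
    ((hFc1 i).differentiable one_ne_zero).differentiableAt
  have hg1 : HasGradientAt (F i) (gradient (F i) w) w := hdiffF.hasGradientAt
  have hg2 := gdQuadGrad lam w
  constructor
  · have hsum := hg1.hasFDerivAt.add hg2.hasFDerivAt
    rw [← map_add] at hsum
    have := hsum.hasGradientAt.gradient
    rwa [LinearIsometryEquiv.symm_apply_apply] at this
  · have hlip : LipschitzWith G.toNNReal (F i) := by
      apply LipschitzWith.of_dist_le_mul
      intro x y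
      rw [Real.dist_eq, dist_eq_norm]
      calc |F i x - F i y| ≤ G * ‖x - y‖ := hFlip i x y
        _ = (G.toNNReal : ℝ) * ‖x - y‖ := by rw [Real.coe_toNNReal G hG]
    have hb := norm_fderiv_le_of_lipschitz ℝ hlip (x₀ := w)
    have : ‖gradient (F i) w‖ = ‖fderiv ℝ (F i) w‖ := by
      rw [gradient]
      exact LinearIsometryEquiv.norm_map _ _
    rw [this]
    calc ‖fderiv ℝ (F i) w‖ ≤ (G.toNNReal : ℝ) := hb
      _ = G := Real.coe_toNNReal G hG

set_option maxHeartbeats 2000000 in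
/-- Gradient dissimilarity bound: if for each subset `S` of size `m`, `sel S w` is the
maximizer of `π ↦ ∑_{i∈S} π i F̃ i w − ν D_S(π)` over `P_{θ,S}` (with
`F̃_i = F_i + (λ/2)‖·‖²`), then
`E_{S ∼ U_m}[ ∑_{i∈S} sel S w i ‖∇F̃_i(w)‖² ] ≤ (4 + 8/(θm)) G² + ‖∇F̄_θ^ν(w)‖²`,
the expectation being the average over all subsets of size `m`. -/
theorem gradient_dissimilarity_bound
    (d n m : ℕ) (hn : 0 < n) (hm : 0 < m) (hmn : m ≤ n)
    (θ lam ν G : ℝ) (hθ : θ ∈ Set.Ioc (0:ℝ) 1) (hlam : 0 ≤ lam) (hν : 0 < ν) (hG : 0 ≤ G)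
    (F : Fin n → EuclideanSpace ℝ (Fin d) → ℝ)
    (hFc1 : ∀ i, ContDiff ℝ 1 (F i))
    (hFlip : ∀ i v v', |F i v - F i v'| ≤ G * ‖v - v'‖)
    (w : EuclideanSpace ℝ (Fin d))
    (sel : Finset (Fin n) → Fin n → ℝ)
    (hsel : ∀ S : Finset (Fin n), S.card = m →
      (∀ i, 0 ≤ sel S i) ∧ (∀ i ∉ S, sel S i = 0) ∧ (∑ i ∈ S, sel S i = 1) ∧
      (∀ i, sel S i ≤ 1 / (θ * m)) ∧
      ∀ π : Fin n → ℝ, (∀ i, 0 ≤ π i) → (∀ i ∉ S, π i = 0) → (∑ i ∈ S, π i = 1) →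
        (∀ i, π i ≤ 1 / (θ * m)) →
        (∑ i ∈ S, π i * (F i w + lam / 2 * ‖w‖ ^ 2))
            - ν * ∑ i ∈ S, π i * Real.log (π i * m)
          ≤ (∑ i ∈ S, sel S i * (F i w + lam / 2 * ‖w‖ ^ 2))
            - ν * ∑ i ∈ S, sel S i * Real.log (sel S i * m)) :
    ∀ Fbar : EuclideanSpace ℝ (Fin d) → ℝ,
      Fbar = (fun v =>
        (∑ S ∈ Finset.univ.filter (fun S : Finset (Fin n) => S.card = m),
          sSup {x : ℝ | ∃ π : Fin n → ℝ, (∀ i, 0 ≤ π i) ∧ (∀ i ∉ S, π i = 0) ∧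
            (∑ i ∈ S, π i = 1) ∧ (∀ i, π i ≤ 1 / (θ * m)) ∧
            x = (∑ i ∈ S, π i * (F i v + lam / 2 * ‖v‖ ^ 2))
              - ν * ∑ i ∈ S, π i * Real.log (π i * m)}) / (n.choose m : ℝ)) →
    (∑ S ∈ Finset.univ.filter (fun S : Finset (Fin n) => S.card = m),
        ∑ i ∈ S, sel S i * ‖gradient (fun z => F i z + lam / 2 * ‖z‖ ^ 2) w‖ ^ 2)
        / (n.choose m : ℝ)
      ≤ (4 + 8 / (θ * m)) * G ^ 2 + ‖gradient Fbar w‖ ^ 2 := by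
  intro Fbar hFbar
  classical
  set 𝒮 := Finset.univ.filter (fun S : Finset (Fin n) => S.card = m) with h𝒮
  set N : ℝ := (n.choose m : ℝ) with hN
  have hNpos : 0 < N := by
    rw [hN]; exact_mod_cast Nat.choose_pos hmn
  have hcard : 𝒮.card = n.choose m := by
    rw [h𝒮, ← Finset.powerset_univ, ← Finset.powersetCard_eq_filter,
      Finset.card_powersetCard, Finset.card_univ, Fintype.card_fin]
  -- selected weights are feasible maximizers
  have selFeas : ∀ S ∈ 𝒮, sel S ∈ gdFeas n m θ S := by
    intro S hS
    obtain ⟨h1, h2, h3, h4, _⟩ := hsel S (Finset.mem_filter.mp hS).2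
    exact ⟨h1, h2, h3, h4⟩
  have selMax : ∀ S ∈ 𝒮, IsMaxOn (gdObj ν m S (fun i => F i w + lam / 2 * ‖w‖ ^ 2))
      (gdFeas n m θ S) (sel S) := by
    intro S hS π hπ
    obtain ⟨_, _, _, _, h5⟩ := hsel S (Finset.mem_filter.mp hS).2
    exact h5 π hπ.1 hπ.2.1 hπ.2.2.1 hπ.2.2.2
  -- rewrite the sSup sets as images
  have hsetEq : ∀ (S : Finset (Fin n)) (v : EuclideanSpace ℝ (Fin d)),
      {x : ℝ | ∃ π : Fin n → ℝ, (∀ i, 0 ≤ π i) ∧ (∀ i ∉ S, π i = 0) ∧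
        (∑ i ∈ S, π i = 1) ∧ (∀ i, π i ≤ 1 / (θ * m)) ∧
        x = (∑ i ∈ S, π i * (F i v + lam / 2 * ‖v‖ ^ 2))
          - ν * ∑ i ∈ S, π i * Real.log (π i * m)}
      = (gdObj ν m S (fun i => F i v + lam / 2 * ‖v‖ ^ 2)) '' gdFeas n m θ S := by
    intro S v
    ext x
    constructor
    · rintro ⟨π, h1, h2, h3, h4, rfl⟩
      exact ⟨π, ⟨h1, h2, h3, h4⟩, rfl⟩
    · rintro ⟨π, ⟨h1, h2, h3, h4⟩, rfl⟩
      exact ⟨π, h1, h2, h3, h4, rfl⟩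
  have hFbar' : Fbar = fun v =>
      (∑ S ∈ 𝒮, sSup ((gdObj ν m S (fun i => F i v + lam / 2 * ‖v‖ ^ 2)) '' gdFeas n m θ S)) / N := by
    rw [hFbar]
    funext v
    congr 1
    exact Finset.sum_congr rfl (fun S _ => by rw [hsetEq])
  -- gradient data
  set u : Fin n → EuclideanSpace ℝ (Fin d) := fun i => gradient (F i) w with hu
  set hvec : EuclideanSpace ℝ (Fin d) := lam • w with hhvec
  have hdecomp : ∀ i : Fin n,
      gradient (fun z => F i z + lam / 2 * ‖z‖ ^ 2) w = u i + hvec :=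
    fun i => (gdGradDecomp (lam := lam) hG hFc1 hFlip w i).1
  have hubd : ∀ i : Fin n, ‖u i‖ ≤ G := fun i => (gdGradDecomp (lam := lam) hG hFc1 hFlip w i).2
  have hgradS : ∀ S ∈ 𝒮, HasGradientAt
      (fun v => sSup ((gdObj ν m S (fun i => F i v + lam / 2 * ‖v‖ ^ 2)) '' gdFeas n m θ S))
      (∑ i ∈ S, sel S i • (u i + hvec)) w := by
    intro S hS
    have := gdHasGradient hm hθ hlam hν hG hFc1 hFlip (Finset.mem_filter.mp hS).2
      (selFeas S hS) (selMax S hS)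
    have heq : ∑ i ∈ S, sel S i • gradient (fun z => F i z + lam / 2 * ‖z‖ ^ 2) w
        = ∑ i ∈ S, sel S i • (u i + hvec) :=
      Finset.sum_congr rfl (fun i _ => by rw [hdecomp i])
    rwa [heq] at this
  -- gradient of Fbar
  set ebar : EuclideanSpace ℝ (Fin d) :=
    N⁻¹ • ∑ S ∈ 𝒮, ∑ i ∈ S, sel S i • u i with hebar
  have hsimpS : ∀ S ∈ 𝒮, ∑ i ∈ S, sel S i • (u i + hvec) = (∑ i ∈ S, sel S i • u i) + hvec := by
    intro S hS
    have h1 : ∑ i ∈ S, sel S i • (u i + hvec)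
        = (∑ i ∈ S, sel S i • u i) + ∑ i ∈ S, sel S i • hvec := by
      rw [← Finset.sum_add_distrib]
      exact Finset.sum_congr rfl (fun i _ => smul_add _ _ _)
    rw [h1, ← Finset.sum_smul, (selFeas S hS).2.2.1, one_smul]
  have hgradFbar : gradient Fbar w = ebar + hvec := by
    have hsum : HasFDerivAt
        (fun v => ∑ S ∈ 𝒮, sSup ((gdObj ν m S (fun i => F i v + lam / 2 * ‖v‖ ^ 2)) '' gdFeas n m θ S))
        (∑ S ∈ 𝒮, (InnerProductSpace.toDual ℝ (EuclideanSpace ℝ (Fin d)))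
          (∑ i ∈ S, sel S i • (u i + hvec))) w :=
      HasFDerivAt.fun_sum (fun S hS => (hgradS S hS).hasFDerivAt)
    have hmul := hsum.const_mul N⁻¹
    have hFbar'' : Fbar = fun v => N⁻¹ *
        ∑ S ∈ 𝒮, sSup ((gdObj ν m S (fun i => F i v + lam / 2 * ‖v‖ ^ 2)) '' gdFeas n m θ S) := by
      rw [hFbar']
      funext v
      rw [div_eq_inv_mul]
    rw [← hFbar''] at hmul
    have hD : N⁻¹ • (∑ S ∈ 𝒮, (InnerProductSpace.toDual ℝ (EuclideanSpace ℝ (Fin d)))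
          (∑ i ∈ S, sel S i • (u i + hvec)))
        = (InnerProductSpace.toDual ℝ (EuclideanSpace ℝ (Fin d))) (ebar + hvec) := by
      rw [← map_sum, ← map_smul]
      congr 1
      have : ∑ S ∈ 𝒮, ∑ i ∈ S, sel S i • (u i + hvec)
          = (∑ S ∈ 𝒮, ∑ i ∈ S, sel S i • u i) + (𝒮.card : ℝ) • hvec := by
        rw [Finset.sum_congr rfl hsimpS, Finset.sum_add_distrib, Finset.sum_const]
        congr 1
        rw [← Nat.cast_smul_eq_nsmul ℝ]
      rw [this, smul_add, hebar]
      congr 1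
      rw [hcard, ← hN, smul_smul, inv_mul_cancel₀ hNpos.ne', one_smul]
    rw [hD] at hmul
    have := hmul.hasGradientAt.gradient
    rwa [LinearIsometryEquiv.symm_apply_apply] at this
  -- rewrite the LHS with the decomposition
  have hLHS : ∀ S ∈ 𝒮, ∑ i ∈ S, sel S i * ‖gradient (fun z => F i z + lam / 2 * ‖z‖ ^ 2) w‖ ^ 2
      = ∑ i ∈ S, sel S i * ‖u i + hvec‖ ^ 2 :=
    fun S _ => Finset.sum_congr rfl (fun i _ => by rw [hdecomp i])
  rw [Finset.sum_congr rfl hLHS, hgradFbar]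
  -- per-S bound
  have key1 : ∀ S ∈ 𝒮, ∑ i ∈ S, sel S i * ‖u i + hvec‖ ^ 2
      ≤ G ^ 2 + (2 * ⟪∑ i ∈ S, sel S i • u i, hvec⟫ + ‖hvec‖ ^ 2) := by
    intro S hS
    obtain ⟨hs0, _, hs1, _⟩ := selFeas S hS
    have hinner : ⟪∑ i ∈ S, sel S i • u i, hvec⟫ = ∑ i ∈ S, sel S i * ⟪u i, hvec⟫ := by
      rw [sum_inner]
      exact Finset.sum_congr rfl (fun i _ => real_inner_smul_left _ _ _)
    have hexp : ∀ i ∈ S, sel S i * ‖u i + hvec‖ ^ 2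
        = sel S i * ‖u i‖ ^ 2 + (2 * (sel S i * ⟪u i, hvec⟫) + sel S i * ‖hvec‖ ^ 2) := by
      intro i _
      rw [norm_add_sq_real]
      ring
    rw [Finset.sum_congr rfl hexp, Finset.sum_add_distrib]
    have h1 : ∑ i ∈ S, sel S i * ‖u i‖ ^ 2 ≤ G ^ 2 := by
      calc ∑ i ∈ S, sel S i * ‖u i‖ ^ 2 ≤ ∑ i ∈ S, sel S i * G ^ 2 := by
            apply Finset.sum_le_sum
            intro i _
            apply mul_le_mul_of_nonneg_left _ (hs0 i)
            have := hubd i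
            nlinarith [norm_nonneg (u i)]
        _ = G ^ 2 := by rw [← Finset.sum_mul, hs1, one_mul]
    have h2 : ∑ i ∈ S, (2 * (sel S i * ⟪u i, hvec⟫) + sel S i * ‖hvec‖ ^ 2)
        = 2 * ⟪∑ i ∈ S, sel S i • u i, hvec⟫ + ‖hvec‖ ^ 2 := by
      rw [Finset.sum_add_distrib, ← Finset.sum_mul, hs1, one_mul, hinner, Finset.mul_sum]
    rw [h2]
    linarith
  -- sum the per-S bounds
  have hEtot : ⟪∑ S ∈ 𝒮, ∑ i ∈ S, sel S i • u i, hvec⟫ = N * ⟪ebar, hvec⟫ := by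
    rw [hebar, real_inner_smul_left]
    field_simp
  have key2 : ∑ S ∈ 𝒮, ∑ i ∈ S, sel S i * ‖u i + hvec‖ ^ 2
      ≤ N * G ^ 2 + (2 * (N * ⟪ebar, hvec⟫) + N * ‖hvec‖ ^ 2) := by
    calc ∑ S ∈ 𝒮, ∑ i ∈ S, sel S i * ‖u i + hvec‖ ^ 2
        ≤ ∑ S ∈ 𝒮, (G ^ 2 + (2 * ⟪∑ i ∈ S, sel S i • u i, hvec⟫ + ‖hvec‖ ^ 2)) :=
          Finset.sum_le_sum key1
      _ = (𝒮.card : ℝ) * G ^ 2 + (2 * ⟪∑ S ∈ 𝒮, ∑ i ∈ S, sel S i • u i, hvec⟫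
            + (𝒮.card : ℝ) * ‖hvec‖ ^ 2) := by
          rw [Finset.sum_add_distrib, Finset.sum_add_distrib, Finset.sum_const, Finset.sum_const,
            ← Finset.mul_sum, sum_inner]
          simp only [nsmul_eq_mul]
      _ = N * G ^ 2 + (2 * (N * ⟪ebar, hvec⟫) + N * ‖hvec‖ ^ 2) := by
          rw [hcard, ← hN, hEtot]
  -- final comparison
  rw [div_le_iff₀ hNpos]
  have hns : ‖ebar + hvec‖ ^ 2 = ‖ebar‖ ^ 2 + 2 * ⟪ebar, hvec⟫ + ‖hvec‖ ^ 2 :=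
    norm_add_sq_real _ _
  have ht : 0 ≤ 8 / (θ * m) := by
    apply div_nonneg (by norm_num)
    exact mul_nonneg hθ.1.le (Nat.cast_nonneg m)
  nlinarith [key2, mul_nonneg (mul_nonneg ht (sq_nonneg G)) hNpos.le,
    mul_nonneg (sq_nonneg G) hNpos.le,
    mul_nonneg (sq_nonneg ‖ebar‖) hNpos.le]
end
end

section
/- Let F_1,…,F_n : ℝ^d → ℝ be G-Lipschitz and L-smooth, let θ ∈ (0,1], 1 ≤ m ≤ n, λ ≥ 0, ν > 0, τ ≥ 1, and set F̃_i(w) = F_i(w) + (λ/2)‖w‖², L' = L + λ + G²/ν. Fix w ∈ ℝ^d, and for each client i define local gradient-descent iterates w_{i,0} = w and w_{i,k+1} = w_{i,k} − γ∇F̃_i(w_{i,k}) for k = 0,…,τ−1. For each subset S of size m let π^S be the maximizer of π ↦ ∑_{i∈S} π_i F̃_i(w) − ν D_S(π) over P_{θ,S}, let F̄_θ^ν(w) = E_{S∼U_m}[max_{π∈P_{θ,S}}(∑_{i∈S} π_i F̃_i(w) − ν D_S(π))] with minimizer w̄*, and define the client drift d = E_{S∼U_m}[ ∑_{i∈S}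 π^S_i ∑_{k=0}^{τ−1} ‖w_{i,k} − w‖² ]. If 0 < γ ≤ 1/(4τ(L+λ)), then d ≤ 8τ²(τ−1)γ² ( (4 + 8/(θm)) G² + 2L' ( F̄_θ^ν(w) − F̄_θ^ν(w̄*) ) ). Moreover, if λ = 0 (with or without smoothing), then d ≤ 8τ²(τ−1)γ² G². -/
open scoped BigOperators
set_option maxHeartbeats 1000000

noncomputable section

/-- Client-drift bound: with local gradient-descent iterates
`w_{i,0} = w`, `w_{i,k+1} = w_{i,k} − γ ∇F̃_i(w_{i,k})` (`F̃_i = F_i + (λ/2)‖·‖²`), weights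
`sel S` maximizing the smoothed partial objective over `P_{θ,S}`, and the drift
`d = E_{S ∼ U_m}[ ∑_{i∈S} sel S i ∑_{k<τ} ‖w_{i,k} − w‖² ]`, if `0 < γ ≤ 1/(4τ(L+λ))`
then `d ≤ 8τ²(τ−1)γ² ((4 + 8/(θm)) G² + 2L'(F̄_θ^ν(w) − F̄_θ^ν(w̄*)))` with
`L' = L + λ + G²/ν`; moreover if `λ = 0` then `d ≤ 8τ²(τ−1)γ² G²`. -/
theorem client_drift_bound
    (d n m τ : ℕ) (hn : 0 < n) (hm : 0 < m) (hmn : m ≤ n) (hτ : 1 ≤ τ)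
    (θ lam ν G L γ : ℝ) (hθ : θ ∈ Set.Ioc (0:ℝ) 1) (hlam : 0 ≤ lam) (hν : 0 < ν)
    (hG : 0 ≤ G) (hL : 0 ≤ L)
    (hγpos : 0 < γ) (hγ : γ ≤ 1 / (4 * τ * (L + lam)))
    (F : Fin n → EuclideanSpace ℝ (Fin d) → ℝ)
    (hFlip : ∀ i v v', |F i v - F i v'| ≤ G * ‖v - v'‖)
    (hFc1 : ∀ i, ContDiff ℝ 1 (F i))
    (hFgrad : ∀ i v v', ‖gradient (F i) v - gradient (F i) v'‖ ≤ L * ‖v - v'‖)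
    (w wbarstar : EuclideanSpace ℝ (Fin d))
    (u : Fin n → ℕ → EuclideanSpace ℝ (Fin d))
    (hu0 : ∀ i, u i 0 = w)
    (hurec : ∀ i k, u i (k + 1)
      = u i k - γ • gradient (fun z => F i z + lam / 2 * ‖z‖ ^ 2) (u i k))
    (sel : Finset (Fin n) → Fin n → ℝ)
    (hsel : ∀ S : Finset (Fin n), S.card = m →
      (∀ i, 0 ≤ sel S i) ∧ (∀ i ∉ S, sel S i = 0) ∧ (∑ i ∈ S, sel S i = 1) ∧
      (∀ i, sel S i ≤ 1 / (θ * m)) ∧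
      ∀ π : Fin n → ℝ, (∀ i, 0 ≤ π i) → (∀ i ∉ S, π i = 0) → (∑ i ∈ S, π i = 1) →
        (∀ i, π i ≤ 1 / (θ * m)) →
        (∑ i ∈ S, π i * (F i w + lam / 2 * ‖w‖ ^ 2))
            - ν * ∑ i ∈ S, π i * Real.log (π i * m)
          ≤ (∑ i ∈ S, sel S i * (F i w + lam / 2 * ‖w‖ ^ 2))
            - ν * ∑ i ∈ S, sel S i * Real.log (sel S i * m)) :
    ∀ Fbar : EuclideanSpace ℝ (Fin d) → ℝ,
      Fbar = (fun v =>
        (∑ S ∈ Finset.univ.filter (fun S : Finset (Fin n) => S.card = m),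
          sSup {x : ℝ | ∃ π : Fin n → ℝ, (∀ i, 0 ≤ π i) ∧ (∀ i ∉ S, π i = 0) ∧
            (∑ i ∈ S, π i = 1) ∧ (∀ i, π i ≤ 1 / (θ * m)) ∧
            x = (∑ i ∈ S, π i * (F i v + lam / 2 * ‖v‖ ^ 2))
              - ν * ∑ i ∈ S, π i * Real.log (π i * m)}) / (n.choose m : ℝ)) →
    (∀ v, Fbar wbarstar ≤ Fbar v) →
    ∀ drift : ℝ,
      drift = (∑ S ∈ Finset.univ.filter (fun S : Finset (Fin n) => S.card = m),
          ∑ i ∈ S, sel S i * ∑ k ∈ Finset.range τ, ‖u i k - w‖ ^ 2) / (n.choose m : ℝ) →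
      drift ≤ 8 * (τ : ℝ) ^ 2 * ((τ : ℝ) - 1) * γ ^ 2 *
          ((4 + 8 / (θ * m)) * G ^ 2
            + 2 * (L + lam + G ^ 2 / ν) * (Fbar w - Fbar wbarstar)) ∧
      (lam = 0 → drift ≤ 8 * (τ : ℝ) ^ 2 * ((τ : ℝ) - 1) * γ ^ 2 * G ^ 2) := by
  intro Fbar hFbar hmin drift hdrift
  haveI : Nonempty (Fin n) := ⟨⟨0, hn⟩⟩
  obtain ⟨hθ0, hθ1⟩ := hθ
  have hm' : (0:ℝ) < m := by exact_mod_cast hm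
  have hτ' : (1:ℝ) ≤ (τ:ℝ) := by exact_mod_cast hτ
  have hτ0 : (0:ℝ) < (τ:ℝ) := by linarith
  obtain ⟨B, hBdef⟩ : ∃ B : ℝ, B = G + lam * ‖w‖ := ⟨_, rfl⟩
  have hB0 : 0 ≤ B := by
    rw [hBdef]
    have := mul_nonneg hlam (norm_nonneg w)
    linarith
  -- gradient formula
  have hgrad : ∀ i v, gradient (fun z => F i z + lam / 2 * ‖z‖ ^ 2) v
      = gradient (F i) v + lam • v := by
    intro i v
    have hdf : DifferentiableAt ℝ (F i) v := ((hFc1 i).differentiable one_ne_zero).differentiableAt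
    have h1 : HasFDerivAt (F i) (InnerProductSpace.toDual ℝ _ (gradient (F i) v)) v :=
      hdf.hasGradientAt.hasFDerivAt
    have h2 : HasFDerivAt (fun z : EuclideanSpace ℝ (Fin d) => lam / 2 * ‖z‖ ^ 2)
        ((lam / 2) • (2 • (innerSL ℝ v))) v :=
      (hasStrictFDerivAt_norm_sq v).hasFDerivAt.const_mul (lam / 2)
    have h3 := h1.add h2
    have heq : InnerProductSpace.toDual ℝ _ (gradient (F i) v) + (lam / 2) • (2 • (innerSL ℝ v))
        = InnerProductSpace.toDual ℝ (EuclideanSpace ℝ (Fin d)) (gradient (F i) v + lam • v) := by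
      ext y
      simp [InnerProductSpace.toDual_apply_apply, innerSL_apply_apply, inner_add_left, inner_smul_left]
      ring
    rw [heq] at h3
    have := h3.hasGradientAt.gradient
    rw [LinearIsometryEquiv.symm_apply_apply] at this
    exact this
  -- gradient norm bound
  have hgnorm : ∀ i v, ‖gradient (F i) v‖ ≤ G := by
    intro i v
    have hnm : ‖gradient (F i) v‖ = ‖fderiv ℝ (F i) v‖ :=
      (InnerProductSpace.toDual ℝ _).symm.norm_map _
    rw [hnm]
    refine norm_fderiv_le_of_lip' ℝ hG ?_
    filter_upwards with x
    simpa [Real.norm_eq_abs] using hFlip i x v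
  have hgw : ∀ i, ‖gradient (F i) w + lam • w‖ ≤ B := by
    intro i
    calc ‖gradient (F i) w + lam • w‖ ≤ ‖gradient (F i) w‖ + ‖lam • w‖ := norm_add_le _ _
      _ ≤ G + lam * ‖w‖ := by
          rw [norm_smul, Real.norm_eq_abs, abs_of_nonneg hlam]
          exact add_le_add (hgnorm i w) le_rfl
      _ = B := hBdef.symm
  have hglip : ∀ i x, ‖(gradient (F i) x + lam • x) - (gradient (F i) w + lam • w)‖
      ≤ (L + lam) * ‖x - w‖ := by
    intro i x
    have h1 : (gradient (F i) x + lam • x) - (gradient (F i) w + lam • w)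
        = (gradient (F i) x - gradient (F i) w) + lam • (x - w) := by
      rw [smul_sub]; abel
    rw [h1]
    calc ‖(gradient (F i) x - gradient (F i) w) + lam • (x - w)‖
        ≤ ‖gradient (F i) x - gradient (F i) w‖ + ‖lam • (x - w)‖ := norm_add_le _ _
      _ ≤ L * ‖x - w‖ + lam * ‖x - w‖ := by
          rw [norm_smul, Real.norm_eq_abs, abs_of_nonneg hlam]
          exact add_le_add (hFgrad i x w) le_rfl
      _ = (L + lam) * ‖x - w‖ := by ring
  -- step-size bound
  have hγL : (τ:ℝ) * (4 * (γ * (L + lam))) ≤ 1 := by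
    rcases eq_or_lt_of_le (by positivity : (0:ℝ) ≤ L + lam) with h | h
    · rw [← h]; simp
    · have h1 : γ * (4 * τ * (L + lam)) ≤ 1 := by
        have := mul_le_mul_of_nonneg_right hγ (by positivity : (0:ℝ) ≤ 4 * τ * (L + lam))
        rwa [div_mul_cancel₀] at this
        positivity
      nlinarith
  -- iterate drift bound
  have hiter : ∀ i, ∀ k, k ≤ τ → ‖u i k - w‖ ≤ 4/3 * k * γ * B := by
    intro i k
    induction k with
    | zero => intro _; simp [hu0]
    | succ k ih =>
      intro hk
      have hk' : k ≤ τ := Nat.le_of_succ_le hk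
      have h1 := ih hk'
      have hkτ : (k:ℝ) + 1 ≤ (τ:ℝ) := by exact_mod_cast hk
      set gw := gradient (F i) w + lam • w with hgwdef
      set gk := gradient (F i) (u i k) + lam • u i k with hgkdef
      have hsplit : u i (k+1) - w = (u i k - w) + (-(γ • (gk - gw)) + -(γ • gw)) := by
        rw [hurec i k, hgrad i (u i k), smul_sub]
        abel
      have h2 : ‖u i (k+1) - w‖
          ≤ ‖u i k - w‖ + γ * ((L + lam) * ‖u i k - w‖) + γ * B := by
        rw [hsplit]
        have t1 := norm_add_le (u i k - w) (-(γ • (gk - gw)) + -(γ • gw))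
        have t2 := norm_add_le (-(γ • (gk - gw))) (-(γ • gw))
        have e1 : ‖-(γ • (gk - gw))‖ = γ * ‖gk - gw‖ := by
          rw [norm_neg, norm_smul, Real.norm_eq_abs, abs_of_pos hγpos]
        have e2 : ‖-(γ • gw)‖ = γ * ‖gw‖ := by
          rw [norm_neg, norm_smul, Real.norm_eq_abs, abs_of_pos hγpos]
        have b1 : γ * ‖gk - gw‖ ≤ γ * ((L + lam) * ‖u i k - w‖) :=
          mul_le_mul_of_nonneg_left (hglip i (u i k)) hγpos.le
        have b2 : γ * ‖gw‖ ≤ γ * B := mul_le_mul_of_nonneg_left (hgw i) hγpos.le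
        rw [e1, e2] at t2
        linarith
      -- arithmetic
      have hc0 : 0 ≤ γ * (L + lam) := by positivity
      have hck : γ * (L + lam) * (k:ℝ) ≤ 1/4 := by
        have s1 : γ * (L + lam) * (k:ℝ) ≤ γ * (L + lam) * (τ:ℝ) :=
          mul_le_mul_of_nonneg_left (by linarith) hc0
        linarith
      have hγB : 0 ≤ γ * B := mul_nonneg hγpos.le hB0
      have h3 : γ * ((L + lam) * ‖u i k - w‖) ≤ 1/3 * (γ * B) := by
        calc γ * ((L + lam) * ‖u i k - w‖)
            = γ * (L + lam) * ‖u i k - w‖ := by ring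
          _ ≤ γ * (L + lam) * (4/3 * (k:ℝ) * γ * B) :=
              mul_le_mul_of_nonneg_left h1 hc0
          _ = (γ * (L + lam) * (k:ℝ)) * (4/3 * (γ * B)) := by ring
          _ ≤ (1/4) * (4/3 * (γ * B)) :=
              mul_le_mul_of_nonneg_right hck (by positivity)
          _ = 1/3 * (γ * B) := by ring
      push_cast
      linarith [h2, h3, h1]
  -- per-client sum bound
  have hτ1' : (0:ℝ) ≤ (τ:ℝ) - 1 := by linarith
  have hsumk : ∀ i, ∑ k ∈ Finset.range τ, ‖u i k - w‖ ^ 2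
      ≤ 16/9 * (τ:ℝ)^2 * ((τ:ℝ) - 1) * γ^2 * B^2 := by
    intro i
    have hterm : ∀ k ∈ Finset.range τ, ‖u i k - w‖ ^ 2
        ≤ (4/3 * ((τ:ℝ) - 1) * γ * B) ^ 2 := by
      intro k hk
      have hklt := Finset.mem_range.mp hk
      have hkle : (k:ℝ) ≤ (τ:ℝ) - 1 := by
        have : (k:ℝ) + 1 ≤ (τ:ℝ) := by exact_mod_cast hklt
        linarith
      have h1 : ‖u i k - w‖ ≤ 4/3 * ((τ:ℝ) - 1) * γ * B := by
        refine le_trans (hiter i k hklt.le) ?_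
        nlinarith [mul_le_mul_of_nonneg_right hkle (mul_nonneg hγpos.le hB0)]
      exact pow_le_pow_left₀ (norm_nonneg _) h1 2
    calc ∑ k ∈ Finset.range τ, ‖u i k - w‖ ^ 2
        ≤ ∑ _k ∈ Finset.range τ, (4/3 * ((τ:ℝ) - 1) * γ * B) ^ 2 :=
          Finset.sum_le_sum hterm
      _ = (τ:ℝ) * (4/3 * ((τ:ℝ) - 1) * γ * B) ^ 2 := by
          rw [Finset.sum_const, Finset.card_range, nsmul_eq_mul]
      _ ≤ 16/9 * (τ:ℝ)^2 * ((τ:ℝ) - 1) * γ^2 * B^2 := by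
          have hpos : 0 ≤ (τ:ℝ) * ((τ:ℝ) - 1) * (γ^2 * B^2) := by
            apply mul_nonneg (mul_nonneg hτ0.le hτ1') (by positivity)
          nlinarith [hpos]
  -- counting subsets
  have hcard : (Finset.univ.filter (fun S : Finset (Fin n) => S.card = m)).card
      = n.choose m := by
    have he : Finset.univ.filter (fun S : Finset (Fin n) => S.card = m)
        = Finset.powersetCard m Finset.univ := by
      ext S
      simp [Finset.mem_powersetCard, Finset.subset_univ]
    rw [he, Finset.card_powersetCard, Finset.card_univ, Fintype.card_fin]
  have hchoosepos : (0:ℝ) < (n.choose m : ℝ) := by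
    exact_mod_cast Nat.choose_pos hmn
  -- drift bound
  have hKB0 : 0 ≤ 16/9 * (τ:ℝ)^2 * ((τ:ℝ) - 1) * γ^2 * B^2 := by
    apply mul_nonneg; apply mul_nonneg; apply mul_nonneg; apply mul_nonneg
    · norm_num
    · positivity
    · exact hτ1'
    · positivity
    · positivity
  have hdrift_le : drift ≤ 16/9 * (τ:ℝ)^2 * ((τ:ℝ) - 1) * γ^2 * B^2 := by
    rw [hdrift, div_le_iff₀ hchoosepos]
    calc (∑ S ∈ Finset.univ.filter (fun S : Finset (Fin n) => S.card = m),
            ∑ i ∈ S, sel S i * ∑ k ∈ Finset.range τ, ‖u i k - w‖ ^ 2)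
        ≤ ∑ _S ∈ Finset.univ.filter (fun S : Finset (Fin n) => S.card = m),
            16/9 * (τ:ℝ)^2 * ((τ:ℝ) - 1) * γ^2 * B^2 := by
          refine Finset.sum_le_sum fun S hS => ?_
          obtain ⟨hs0, _, hs1, _, _⟩ := hsel S (Finset.mem_filter.mp hS).2
          calc ∑ i ∈ S, sel S i * ∑ k ∈ Finset.range τ, ‖u i k - w‖ ^ 2
              ≤ ∑ i ∈ S, sel S i * (16/9 * (τ:ℝ)^2 * ((τ:ℝ) - 1) * γ^2 * B^2) :=
                Finset.sum_le_sum fun i _ =>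
                  mul_le_mul_of_nonneg_left (hsumk i) (hs0 i)
            _ = 16/9 * (τ:ℝ)^2 * ((τ:ℝ) - 1) * γ^2 * B^2 := by
                rw [← Finset.sum_mul, hs1, one_mul]
      _ = 16/9 * (τ:ℝ)^2 * ((τ:ℝ) - 1) * γ^2 * B^2 * (n.choose m : ℝ) := by
          rw [Finset.sum_const, hcard, nsmul_eq_mul]; ring
  -- the feasible sets
  set A : Finset (Fin n) → EuclideanSpace ℝ (Fin d) → Set ℝ := fun S v =>
    {x : ℝ | ∃ π : Fin n → ℝ, (∀ i, 0 ≤ π i) ∧ (∀ i ∉ S, π i = 0) ∧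
      (∑ i ∈ S, π i = 1) ∧ (∀ i, π i ≤ 1 / (θ * m)) ∧
      x = (∑ i ∈ S, π i * (F i v + lam / 2 * ‖v‖ ^ 2))
        - ν * ∑ i ∈ S, π i * Real.log (π i * m)} with hA
  have hFbarA : ∀ v, Fbar v
      = (∑ S ∈ Finset.univ.filter (fun S : Finset (Fin n) => S.card = m),
          sSup (A S v)) / (n.choose m : ℝ) := by
    intro v; simp only [hFbar, hA]
  have hentropy : ∀ (S : Finset (Fin n)) (π : Fin n → ℝ), S.card = m → (∀ i, 0 ≤ π i) →
      (∑ i ∈ S, π i = 1) → 0 ≤ ∑ i ∈ S, π i * Real.log (π i * m) := by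
    intro S π hS hpos hsum
    have hterm : ∀ i ∈ S, π i - 1/(m:ℝ) ≤ π i * Real.log (π i * m) := by
      intro i _
      rcases eq_or_lt_of_le (hpos i) with h | h
      · have h1m : (0:ℝ) ≤ 1/(m:ℝ) := by positivity
        rw [← h]
        simp only [zero_mul, zero_sub]
        linarith
      · have hpm : 0 < π i * (m:ℝ) := by positivity
        have hlog : 1 - (π i * (m:ℝ))⁻¹ ≤ Real.log (π i * m) := by
          have h2 := Real.log_le_sub_one_of_pos (show (0:ℝ) < (π i * (m:ℝ))⁻¹ by positivity)
          rw [Real.log_inv] at h2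
          linarith
        have h3 := mul_le_mul_of_nonneg_left hlog (hpos i)
        have h4 : π i * (1 - (π i * (m:ℝ))⁻¹) = π i - 1/(m:ℝ) := by
          field_simp
        rw [h4] at h3
        exact h3
    have h5 := Finset.sum_le_sum hterm
    have h6 : ∑ i ∈ S, (π i - 1/(m:ℝ)) = 0 := by
      rw [Finset.sum_sub_distrib, hsum, Finset.sum_const, hS, nsmul_eq_mul]
      field_simp
      ring
    rw [h6] at h5
    exact h5
  have hbdd : ∀ S : Finset (Fin n), S.card = m → ∀ v, BddAbove (A S v) := by
    intro S hS v
    refine ⟨Finset.univ.sup' Finset.univ_nonempty (fun j => F j v + lam / 2 * ‖v‖ ^ 2), ?_⟩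
    rintro x hx
    simp only [hA, Set.mem_setOf_eq] at hx
    obtain ⟨π, h0, ho, hs, hub, rfl⟩ := hx
    have h1 : ∑ i ∈ S, π i * (F i v + lam / 2 * ‖v‖ ^ 2)
        ≤ Finset.univ.sup' Finset.univ_nonempty (fun j => F j v + lam / 2 * ‖v‖ ^ 2) := by
      calc ∑ i ∈ S, π i * (F i v + lam / 2 * ‖v‖ ^ 2)
          ≤ ∑ i ∈ S, π i * Finset.univ.sup' Finset.univ_nonempty
              (fun j => F j v + lam / 2 * ‖v‖ ^ 2) :=
            Finset.sum_le_sum fun i _ =>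
              mul_le_mul_of_nonneg_left (Finset.le_sup' (fun j => F j v + lam / 2 * ‖v‖ ^ 2) (Finset.mem_univ i)) (h0 i)
        _ = _ := by rw [← Finset.sum_mul, hs, one_mul]
    have h2 := hentropy S π hS h0 hs
    have h3 : 0 ≤ ν * ∑ i ∈ S, π i * Real.log (π i * m) := mul_nonneg hν.le h2
    linarith
  have hne : ∀ S : Finset (Fin n), S.card = m → ∀ v, (A S v).Nonempty := by
    intro S hS v
    refine ⟨(∑ i ∈ S, (if i ∈ S then (m:ℝ)⁻¹ else 0) * (F i v + lam / 2 * ‖v‖ ^ 2))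
        - ν * ∑ i ∈ S, (if i ∈ S then (m:ℝ)⁻¹ else 0)
            * Real.log ((if i ∈ S then (m:ℝ)⁻¹ else 0) * m), ?_⟩
    simp only [hA, Set.mem_setOf_eq]
    refine ⟨fun i => if i ∈ S then (m:ℝ)⁻¹ else 0, ?_, ?_, ?_, ?_, rfl⟩
    · intro i; dsimp only; split
      · positivity
      · exact le_refl 0
    · intro i hi; exact if_neg hi
    · calc ∑ i ∈ S, (if i ∈ S then (m:ℝ)⁻¹ else 0) = ∑ _i ∈ S, (m:ℝ)⁻¹ :=
            Finset.sum_congr rfl fun i hi => if_pos hi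
        _ = 1 := by
            rw [Finset.sum_const, hS, nsmul_eq_mul]
            field_simp
    · intro i; dsimp only; split
      · have hθm : θ * (m:ℝ) ≤ (m:ℝ) := by nlinarith
        have h1 : 1/(m:ℝ) ≤ 1/(θ*(m:ℝ)) := one_div_le_one_div_of_le (by positivity) hθm
        simpa [one_div] using h1
      · positivity
  have hF0w : ∀ i, F i 0 - G * ‖w‖ ≤ F i w := by
    intro i
    have h1 := hFlip i w 0
    rw [sub_zero] at h1
    have h2 := abs_le.mp h1
    linarith [h2.1]
  have hshift : ∀ S : Finset (Fin n), S.card = m →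
      sSup (A S 0) + (lam / 2 * ‖w‖ ^ 2 - G * ‖w‖) ≤ sSup (A S w) := by
    intro S hS
    have hb := hbdd S hS w
    have hle : sSup (A S 0) ≤ sSup (A S w) - (lam / 2 * ‖w‖ ^ 2 - G * ‖w‖) := by
      refine csSup_le (hne S hS 0) ?_
      rintro x hx
      simp only [hA, Set.mem_setOf_eq] at hx
      obtain ⟨π, h0, ho, hs, hub, rfl⟩ := hx
      have hmem : (∑ i ∈ S, π i * (F i w + lam / 2 * ‖w‖ ^ 2))
          - ν * ∑ i ∈ S, π i * Real.log (π i * m) ∈ A S w := by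
        simp only [hA, Set.mem_setOf_eq]
        exact ⟨π, h0, ho, hs, hub, rfl⟩
      have hsup := le_csSup hb hmem
      have hterm : ∀ i ∈ S,
          π i * (F i 0 + lam / 2 * ‖(0:EuclideanSpace ℝ (Fin d))‖ ^ 2)
            + π i * (lam / 2 * ‖w‖ ^ 2 - G * ‖w‖)
          ≤ π i * (F i w + lam / 2 * ‖w‖ ^ 2) := by
        intro i _
        have h1 := hF0w i
        have h2 : F i 0 + lam / 2 * ‖(0:EuclideanSpace ℝ (Fin d))‖ ^ 2
            + (lam / 2 * ‖w‖ ^ 2 - G * ‖w‖) ≤ F i w + lam / 2 * ‖w‖ ^ 2 := by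
          rw [norm_zero]
          ring_nf
          linarith
        calc π i * (F i 0 + lam / 2 * ‖(0:EuclideanSpace ℝ (Fin d))‖ ^ 2)
              + π i * (lam / 2 * ‖w‖ ^ 2 - G * ‖w‖)
            = π i * (F i 0 + lam / 2 * ‖(0:EuclideanSpace ℝ (Fin d))‖ ^ 2
                + (lam / 2 * ‖w‖ ^ 2 - G * ‖w‖)) := by ring
          _ ≤ π i * (F i w + lam / 2 * ‖w‖ ^ 2) := mul_le_mul_of_nonneg_left h2 (h0 i)
      have hsum2 := Finset.sum_le_sum hterm
      rw [Finset.sum_add_distrib, ← Finset.sum_mul, hs, one_mul] at hsum2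
      linarith
    linarith
  have hΔ0 : 0 ≤ Fbar w - Fbar wbarstar := sub_nonneg.mpr (hmin w)
  have hΔlb : lam / 2 * ‖w‖ ^ 2 - G * ‖w‖ ≤ Fbar w - Fbar wbarstar := by
    have hsumle : ∑ S ∈ Finset.univ.filter (fun S : Finset (Fin n) => S.card = m),
        (sSup (A S 0) + (lam / 2 * ‖w‖ ^ 2 - G * ‖w‖))
        ≤ ∑ S ∈ Finset.univ.filter (fun S : Finset (Fin n) => S.card = m), sSup (A S w) :=
      Finset.sum_le_sum fun S hS => hshift S (Finset.mem_filter.mp hS).2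
    rw [Finset.sum_add_distrib, Finset.sum_const, hcard, nsmul_eq_mul] at hsumle
    have h3 : ((∑ S ∈ Finset.univ.filter (fun S : Finset (Fin n) => S.card = m),
        sSup (A S 0)) + (n.choose m : ℝ) * (lam / 2 * ‖w‖ ^ 2 - G * ‖w‖)) / (n.choose m : ℝ)
        ≤ (∑ S ∈ Finset.univ.filter (fun S : Finset (Fin n) => S.card = m),
            sSup (A S w)) / (n.choose m : ℝ) := by
      exact div_le_div_of_nonneg_right hsumle hchoosepos.le
    rw [add_div, mul_div_cancel_left₀ _ (ne_of_gt hchoosepos)] at h3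
    have hFw := hFbarA w
    have hF0 := hFbarA 0
    have hm0 := hmin 0
    linarith
  -- final assembly
  have hK0 : 0 ≤ (τ:ℝ)^2 * ((τ:ℝ) - 1) * γ^2 :=
    mul_nonneg (mul_nonneg (by positivity) hτ1') (by positivity)
  constructor
  · have key : 16/9 * B^2
        ≤ 8 * ((4 + 8/(θ*(m:ℝ))) * G^2
            + 2*(L + lam + G^2/ν)*(Fbar w - Fbar wbarstar)) := by
      have h8G : 0 ≤ 8/(θ*(m:ℝ)) * G^2 := by positivity
      have hL' : lam ≤ L + lam + G^2/ν := by
        have : 0 ≤ G^2/ν := by positivity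
        linarith
      have hlamΔ := mul_le_mul_of_nonneg_right hL' hΔ0
      have hlb := mul_le_mul_of_nonneg_left hΔlb hlam
      rw [hBdef]
      nlinarith [sq_nonneg (11*G - 7*(lam*‖w‖)), hlb, hlamΔ, h8G, hΔ0,
        sq_nonneg (lam*‖w‖), mul_nonneg hlam (norm_nonneg w)]
    calc drift ≤ 16/9 * (τ:ℝ)^2*((τ:ℝ)-1)*γ^2*B^2 := hdrift_le
      _ = ((τ:ℝ)^2*((τ:ℝ)-1)*γ^2) * (16/9 * B^2) := by ring
      _ ≤ ((τ:ℝ)^2*((τ:ℝ)-1)*γ^2) * (8 * ((4 + 8/(θ*(m:ℝ)))*G^2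
            + 2*(L+lam+G^2/ν)*(Fbar w - Fbar wbarstar))) :=
          mul_le_mul_of_nonneg_left key hK0
      _ = 8*(τ:ℝ)^2*((τ:ℝ)-1)*γ^2*((4 + 8/(θ*(m:ℝ)))*G^2
            + 2*(L+lam+G^2/ν)*(Fbar w - Fbar wbarstar)) := by ring
  · intro h0
    have hBG : B = G := by rw [hBdef, h0]; ring
    rw [hBG] at hdrift_le
    linarith [hdrift_le, mul_nonneg hK0 (sq_nonneg G)]
end
end
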